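/- arXiv:1109.4700 — 4 statements merged into one kernel-verified Lean document; each statement's English description precedes it below -/
import Mathlib

section
/- Let i < j be odd positive integers. In the graph with vertex set {0,1,...,j} and edges {a,b} whenever a + b = i or a + b = j (with a ≠ b), every connected component is a path, and the number of connected components equals (j − i)/2. -/
/-- The condition graph for the pair `(i, j)`: vertices are `0, 1, ..., j` and an edge
joins distinct `a, b` iff `a + b = i` or `a + b = j`. -/
def condGraph (i j : ℕ) : SimpleGraph (Fin (j + 1)) where
  Adj a b := a ≠ b ∧ (a.1 + b.1 = i ∨ a.1 + b.1 = j)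
  symm := by
    refine ⟨?_⟩
    intro a b h
    exact ⟨h.1.symm, by rw [Nat.add_comm]; exact h.2⟩
  loopless := ⟨fun a h => h.1 rfl⟩

instance (i j : ℕ) : DecidableRel (condGraph i j).Adj :=
  fun a b => inferInstanceAs (Decidable (a ≠ b ∧ (a.1 + b.1 = i ∨ a.1 + b.1 = j)))


open SimpleGraph Walk

/-- In a cycle, the start vertex has two distinct neighbors in the support. -/
lemma cycle_two_neighbors {V : Type*} {G : SimpleGraph V} {v : V} {p : G.Walk v v}
    (hp : p.IsCycle) :
    ∃ a b, G.Adj v a ∧ G.Adj v b ∧ a ≠ b ∧ a ∈ p.support ∧ b ∈ p.support := by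
  have h3 := hp.three_le_length
  cases p with
  | nil => exact absurd rfl hp.ne_nil
  | @cons _ x _ h q =>
    have hqlen : q.darts ≠ [] := by
      have h1 : q.darts.length = q.length := q.length_darts
      have h2 : 1 ≤ q.length := by simp at h3; omega
      intro hnil
      rw [hnil] at h1
      simp at h1
      omega
    set dl := q.darts.getLast hqlen with hdl
    have hsnd : dl.snd = v := by rw [hdl, q.getLast_darts_eq_lastDart hqlen]; rfl
    have hadj : G.Adj v dl.fst := by
      have := dl.adj
      rw [hsnd] at this
      exact this.symm
    refine ⟨x, dl.fst, h, hadj, ?_, ?_, ?_⟩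
    · -- x ≠ dl.fst
      intro hxe
      have htrail := hp.isTrail
      rw [Walk.isTrail_cons] at htrail
      apply htrail.2
      have hmem : dl ∈ q.darts := List.getLast_mem hqlen
      have hq : dl.edge ∈ q.edges := List.mem_map_of_mem hmem
      have hedge : dl.edge = s(v, x) := by
        have hpr : dl.toProd = (x, v) := Prod.ext hxe.symm hsnd
        show s(dl.fst, dl.snd) = s(v, x)
        rw [← hxe, hsnd, Sym2.eq_swap]
      rwa [hedge] at hq
    · simp [Walk.support_cons, q.start_mem_support]
    · have : dl.fst ∈ q.support :=
        q.dart_fst_mem_support_of_mem_darts (List.getLast_mem hqlen)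
      simp [Walk.support_cons]
      right; exact this

/-- Support membership is preserved under rotation of a nonempty closed walk. -/
lemma mem_support_rotate_iff {V : Type*} [DecidableEq V] {G : SimpleGraph V} {v u x : V} (c : G.Walk v v)
    (hc : ¬ c.Nil) (h : u ∈ c.support) :
    x ∈ (c.rotate u h).support ↔ x ∈ c.support := by
  have key : ∀ {w : V} (q : G.Walk w w), ¬ q.Nil → ∀ y : V,
      (y ∈ q.support ↔ y ∈ q.darts.map (fun d => d.snd)) := by
    intro w q hq y
    have hd : q.darts ≠ [] := by
      intro hnil
      have h1 : q.darts.length = q.length := q.length_darts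
      rw [hnil] at h1
      simp at h1
      exact hq (Walk.nil_iff_length_eq.mpr h1.symm)
    constructor
    · intro hy
      rw [← q.cons_map_snd_darts] at hy
      rcases List.mem_cons.mp hy with rfl | hy
      · have hl : (q.darts.getLast hd).snd = y := by rw [q.getLast_darts_eq_lastDart hd]; rfl
        have hm : (fun d : G.Dart => d.snd) (q.darts.getLast hd) ∈ q.darts.map (fun d => d.snd) :=
          List.mem_map_of_mem (List.getLast_mem hd)
        simpa [hl] using hm
      · exact hy
    · intro hy
      rw [← q.cons_map_snd_darts]
      exact List.mem_cons_of_mem _ hy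
  have hperm2 : ((c.rotate u h).darts).Perm c.darts := (c.rotate_darts u h).perm
  have hrotnil : ¬ (c.rotate u h).Nil := by
    intro hn
    apply hc
    have h1 : (c.rotate u h).darts.length = c.darts.length := hperm2.length_eq
    rw [Walk.nil_iff_length_eq] at hn ⊢
    rw [← c.length_darts, ← h1, (c.rotate u h).length_darts]
    exact hn
  rw [key _ hrotnil x, key _ hc x]
  exact (hperm2.map _).mem_iff

section condLemmas

variable {i j : ℕ}

lemma condGraph_adj_of (hi : Odd i) (hj : Odd j) {a b : Fin (j+1)}
    (h : a.1 + b.1 = i ∨ a.1 + b.1 = j) : (condGraph i j).Adj a b := by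
  refine ⟨?_, h⟩
  intro hab
  rw [Nat.odd_iff] at hi hj
  have : a.1 = b.1 := congrArg Fin.val hab
  omega

lemma condGraph_reach_sub_d (hi : Odd i) (hj : Odd j) (hij : i < j)
    {n : ℕ} (hn : n ≤ j) (hd : j - i ≤ n) :
    (condGraph i j).Reachable ⟨n, by omega⟩ ⟨n - (j - i), by omega⟩ := by
  have h1 : (condGraph i j).Adj ⟨n - (j - i), by omega⟩ ⟨j - n, by omega⟩ :=
    condGraph_adj_of hi hj (Or.inl (by show n - (j - i) + (j - n) = i; omega))
  have h2 : (condGraph i j).Adj ⟨j - n, by omega⟩ ⟨n, by omega⟩ :=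
    condGraph_adj_of hi hj (Or.inr (by show j - n + n = j; omega))
  exact h2.reachable.symm.trans h1.reachable.symm

lemma condGraph_reach_mod (hi : Odd i) (hj : Odd j) (hij : i < j) :
    ∀ n : ℕ, ∀ hn : n ≤ j,
      (condGraph i j).Reachable ⟨n, by omega⟩ ⟨n % (j - i), by exact lt_of_le_of_lt (le_trans (Nat.mod_le n _) hn) (Nat.lt_succ_self j)⟩ := by
  intro n
  induction n using Nat.strong_induction_on with
  | _ n ih =>
    intro hn
    by_cases hlt : n < j - i
    · have : n % (j - i) = n := Nat.mod_eq_of_lt hlt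
      exact (by rw [Fin.mk.injEq]; omega : (⟨n, by omega⟩ : Fin (j+1)) = ⟨n % (j-i), by omega⟩) ▸ SimpleGraph.Reachable.refl _
    · have hd : j - i ≤ n := by omega
      have hdpos : 0 < j - i := by omega
      have h1 := condGraph_reach_sub_d hi hj hij hn hd
      have h2 := ih (n - (j - i)) (by omega) (by omega)
      have hmod : (n - (j - i)) % (j - i) = n % (j - i) := by
        conv_rhs => rw [← Nat.sub_add_cancel hd]
        rw [Nat.add_mod_right]
      refine h1.trans ?_
      convert h2 using 2
      exact hmod.symm

end condLemmas

section condLemmas2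

variable {i j : ℕ}

lemma condGraph_cast_j (hij : i < j) :
    ((j : ℕ) : ZMod (j - i)) = ((i : ℕ) : ZMod (j - i)) := by
  have h : (j : ℕ) = i + (j - i) := by omega
  calc ((j:ℕ) : ZMod (j-i)) = ((i + (j-i) : ℕ) : ZMod (j-i)) := by rw [← h]
    _ = ((i:ℕ) : ZMod (j-i)) + ((j - i : ℕ) : ZMod (j-i)) := by push_cast; ring
    _ = ((i:ℕ) : ZMod (j-i)) := by rw [ZMod.natCast_self, add_zero]

lemma condGraph_walk_rel (hij : i < j) {v w : Fin (j+1)}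
    (p : (condGraph i j).Walk v w) :
    ((v.1 : ZMod (j - i)) = (w.1 : ZMod (j - i)) ∨
      (v.1 : ZMod (j - i)) + (w.1 : ZMod (j - i)) = ((i : ℕ) : ZMod (j - i))) := by
  induction p with
  | nil => left; rfl
  | @cons a b _ h q ih =>
    have hab : (a.1 : ZMod (j - i)) + (b.1 : ZMod (j - i)) = ((i : ℕ) : ZMod (j - i)) := by
      rcases h.2 with h2 | h2
      · rw [← h2]; push_cast; ring
      · calc (a.1 : ZMod (j - i)) + (b.1 : ZMod (j - i))
            = ((a.1 + b.1 : ℕ) : ZMod (j - i)) := by push_cast; ring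
          _ = ((j : ℕ) : ZMod (j - i)) := by rw [h2]
          _ = _ := condGraph_cast_j hij
    rcases ih with h3 | h3
    · right; rw [← h3]; exact hab
    · left; linear_combination hab - h3

lemma condGraph_rel_reach (hi : Odd i) (hj : Odd j) (hij : i < j) {v w : Fin (j+1)}
    (h : (v.1 : ZMod (j - i)) = (w.1 : ZMod (j - i))) :
    (condGraph i j).Reachable v w := by
  rw [ZMod.natCast_eq_natCast_iff'] at h
  have h1 := condGraph_reach_mod hi hj hij v.1 (by omega)
  have h2 := condGraph_reach_mod hi hj hij w.1 (by omega)
  have e1 : (⟨v.1, by omega⟩ : Fin (j+1)) = v := Fin.ext rfl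
  have e2 : (⟨w.1, by omega⟩ : Fin (j+1)) = w := Fin.ext rfl
  rw [e1] at h1; rw [e2] at h2
  refine h1.trans ?_
  convert h2.symm using 2

lemma condGraph_reach_iff (hi : Odd i) (hj : Odd j) (hij : i < j) (v w : Fin (j+1)) :
    (condGraph i j).Reachable v w ↔
      ((v.1 : ZMod (j - i)) = (w.1 : ZMod (j - i)) ∨
        (v.1 : ZMod (j - i)) + (w.1 : ZMod (j - i)) = ((i : ℕ) : ZMod (j - i))) := by
  constructor
  · rintro ⟨p⟩; exact condGraph_walk_rel hij p
  · rintro (h1 | h1)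
    · exact condGraph_rel_reach hi hj hij h1
    · have hadj : (condGraph i j).Adj ⟨j - w.1, by omega⟩ w :=
        condGraph_adj_of hi hj (Or.inr (by show j - w.1 + w.1 = j; omega))
      have h1' : ((j - w.1 : ℕ) : ZMod (j - i)) = (v.1 : ZMod (j - i)) := by
        rw [Nat.cast_sub (by omega : w.1 ≤ j), condGraph_cast_j hij]
        linear_combination -h1
      exact (condGraph_rel_reach hi hj hij h1'.symm).trans hadj.reachable

lemma condGraph_not_fixed (hi : Odd i) (hj : Odd j) (hij : i < j) (x : ZMod (j - i)) :
    x + x ≠ ((i : ℕ) : ZMod (j - i)) := by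
  haveI : NeZero (j - i) := ⟨by omega⟩
  intro heq
  have h1 : ((x.val + x.val : ℕ) : ZMod (j - i)) = ((i : ℕ) : ZMod (j - i)) := by
    push_cast
    simpa [ZMod.natCast_val, ZMod.cast_id] using heq
  rw [ZMod.natCast_eq_natCast_iff] at h1
  have hd2 : 2 ∣ (j - i) := by
    rw [Nat.odd_iff] at hi hj; omega
  have h2 := Nat.ModEq.of_dvd hd2 h1
  rw [Nat.ModEq] at h2
  rw [Nat.odd_iff] at hi
  omega

end condLemmas2

/-- For odd positive `i < j`, every connected component of the condition graph is a path
(each vertex has degree at most 2 and there are no cycles) and the number of connected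
components equals `(j - i)/2`. -/

theorem condGraph_components (i j : ℕ) (hi : Odd i) (hj : Odd j) (h0 : 0 < i)
    (hij : i < j) :
    (∀ v : Fin (j + 1), (condGraph i j).degree v ≤ 2) ∧
    (condGraph i j).IsAcyclic ∧
    Nat.card (condGraph i j).ConnectedComponent = (j - i) / 2 := by
  refine ⟨?_, ?_, ?_⟩
  · -- degrees
    intro v
    have hvj : v.1 ≤ j := by omega
    have hsub : (condGraph i j).neighborFinset v ⊆
        {⟨i - v.1, by omega⟩, ⟨j - v.1, by omega⟩} := by
      intro w hw
      rw [SimpleGraph.mem_neighborFinset] at hw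
      simp only [Finset.mem_insert, Finset.mem_singleton]
      rcases hw.2 with h2 | h2
      · left; apply Fin.ext; show w.1 = i - v.1; omega
      · right; apply Fin.ext; show w.1 = j - v.1; omega
    calc (condGraph i j).degree v
        = ((condGraph i j).neighborFinset v).card := rfl
      _ ≤ ({⟨i - v.1, by omega⟩, ⟨j - v.1, by omega⟩} : Finset (Fin (j+1))).card :=
          Finset.card_le_card hsub
      _ ≤ 2 := (Finset.card_insert_le _ _).trans (by simp)
  · -- acyclic
    intro v p hp
    have hsupp : p.support.toFinset.Nonempty :=
      ⟨v, List.mem_toFinset.mpr p.start_mem_support⟩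
    obtain ⟨m, hmF, hmin⟩ := p.support.toFinset.exists_min_image id hsupp
    rw [List.mem_toFinset] at hmF
    have hmin' : ∀ x, x ∈ p.support → m.1 ≤ x.1 := fun x hx =>
      Fin.le_def.mp (hmin x (List.mem_toFinset.mpr hx))
    obtain ⟨a, b, hva, hvb, hab, ha, hb⟩ := cycle_two_neighbors (hp.rotate hmF)
    rw [mem_support_rotate_iff p hp.not_nil hmF] at ha hb
    have hone : ∃ w, w ∈ p.support ∧ m.1 + w.1 = j := by
      rcases hva.2 with h1 | h1
      · rcases hvb.2 with h2 | h2
        · exact absurd (Fin.ext (by omega : a.1 = b.1)) hab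
        · exact ⟨b, hb, h2⟩
      · exact ⟨a, ha, h1⟩
    obtain ⟨w, hw, hwj⟩ := hone
    obtain ⟨a', b', h1', h2', hne', ha', hb'⟩ := cycle_two_neighbors (hp.rotate hw)
    rw [mem_support_rotate_iff p hp.not_nil hw] at ha' hb'
    have hx : ∃ x, x ∈ p.support ∧ w.1 + x.1 = i := by
      rcases h1'.2 with h1 | h1
      · exact ⟨a', ha', h1⟩
      · rcases h2'.2 with h2 | h2
        · exact ⟨b', hb', h2⟩
        · exact absurd (Fin.ext (by omega : a'.1 = b'.1)) hne'
    obtain ⟨x, hxs, hxi⟩ := hx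
    have h1 := hmin' x hxs
    have h2 := hmin' w hw
    omega
  · -- component count
    haveI : NeZero (j - i) := ⟨by omega⟩
    classical
    haveI : Fintype (condGraph i j).ConnectedComponent := Fintype.ofFinite _
    let c : ZMod (j - i) → (condGraph i j).ConnectedComponent :=
      fun x => (condGraph i j).connectedComponentMk
        ⟨x.val, by have := ZMod.val_lt x; omega⟩
    have hkey : ∀ x y : ZMod (j - i),
        c x = c y ↔ (x = y ∨ x + y = ((i : ℕ) : ZMod (j - i))) := by
      intro x y
      show (condGraph i j).connectedComponentMk _ = (condGraph i j).connectedComponentMk _ ↔ _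
      rw [SimpleGraph.ConnectedComponent.eq, condGraph_reach_iff hi hj hij]
      simp [ZMod.natCast_val, ZMod.cast_id]
    have hsurj : ∀ C : (condGraph i j).ConnectedComponent, ∃ x, c x = C := by
      intro C
      obtain ⟨v, rfl⟩ := C.exists_rep
      refine ⟨(v.1 : ZMod (j - i)), ?_⟩
      show (condGraph i j).connectedComponentMk _ = (condGraph i j).connectedComponentMk v
      rw [SimpleGraph.ConnectedComponent.eq]
      apply condGraph_rel_reach hi hj hij
      simp [ZMod.natCast_val, ZMod.cast_id]
    have hfib : ∀ C : (condGraph i j).ConnectedComponent,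
        (Finset.univ.filter fun x : ZMod (j - i) => c x = C).card = 2 := by
      intro C
      obtain ⟨x₀, hx₀⟩ := hsurj C
      have hset : (Finset.univ.filter fun x : ZMod (j - i) => c x = C)
          = {x₀, ((i : ℕ) : ZMod (j - i)) - x₀} := by
        ext x
        simp only [Finset.mem_filter, Finset.mem_univ, true_and,
          Finset.mem_insert, Finset.mem_singleton]
        rw [← hx₀, hkey]
        constructor
        · rintro (rfl | hsum)
          · exact Or.inl rfl
          · exact Or.inr (eq_sub_of_add_eq hsum)
        · rintro (rfl | rfl)
          · exact Or.inl rfl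
          · exact Or.inr (by ring)
      rw [hset, Finset.card_insert_of_notMem, Finset.card_singleton]
      intro hmem
      rw [Finset.mem_singleton] at hmem
      exact condGraph_not_fixed hi hj hij x₀ (eq_sub_iff_add_eq.mp hmem)
    have hsum : (Finset.univ : Finset (ZMod (j - i))).card
        = ∑ C : (condGraph i j).ConnectedComponent,
            (Finset.univ.filter fun x : ZMod (j - i) => c x = C).card :=
      Finset.card_eq_sum_card_fiberwise (fun x _ => Finset.mem_univ (c x))
    rw [Finset.card_univ, ZMod.card] at hsum
    simp only [hfib, Finset.sum_const, Finset.card_univ, smul_eq_mul] at hsum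
    rw [Nat.card_eq_fintype_card]
    omega
end

section
/- Let i < j be odd positive integers and let A be a uniformly random subset of {0,1,...,j}. Then the probability that neither i nor j belongs to A + A equals F_{q+2}^r · F_{q+4}^{r'} / 2^{j+1}, where q = 2⌈(i+1)/(j−i)⌉, r = ((j−i)⌈(i+1)/(j−i)⌉ − (i+1))/2, r' = (j+1 − (j−i)⌈(i+1)/(j−i)⌉)/2, and F_k is the k-th Fibonacci number (F₁ = F₂ = 1). Equivalently, the number of subsets A ⊆ {0,...,j} with i ∉ A+A and j ∉ A+A equals F_{q+2}^r · F_{q+4}^{r'}. -/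
open scoped Pointwise

open scoped Pointwise
open Finset

def NSC (n : ℕ) : Finset (Finset ℕ) :=
  (Finset.range n).powerset.filter (fun S => ∀ k ∈ S, k + 1 ∉ S)

lemma mem_NSC {n : ℕ} {S : Finset ℕ} :
    S ∈ NSC n ↔ (∀ x ∈ S, x < n) ∧ ∀ k ∈ S, k + 1 ∉ S := by
  simp [NSC, Finset.subset_iff]

lemma nsc_rec (n : ℕ) : (NSC (n+2)).card = (NSC (n+1)).card + (NSC n).card := by
  classical
  have h1 : (NSC (n+2)).filter (fun S => (n+1) ∉ S) = NSC (n+1) := by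
    ext S
    simp only [mem_filter, mem_NSC]
    constructor
    · rintro ⟨⟨h1, h2⟩, h3⟩
      refine ⟨fun x hx => ?_, h2⟩
      rcases Nat.lt_or_ge x (n+1) with h | h
      · exact h
      · have := h1 x hx
        have hx1 : x = n + 1 := by omega
        exact absurd hx (by simpa [hx1] using h3)
    · rintro ⟨h1, h2⟩
      exact ⟨⟨fun x hx => Nat.lt_succ_of_lt (h1 x hx), h2⟩, fun hc => by have := h1 _ hc; omega⟩
  have h2 : ((NSC (n+2)).filter (fun S => (n+1) ∈ S)).card = (NSC n).card := by
    refine Finset.card_bij' (fun S _ => S.erase (n+1)) (fun S _ => insert (n+1) S) ?hi ?hj ?li ?ri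
    case hi =>
      intro S hS
      simp only [mem_filter, mem_NSC] at hS
      obtain ⟨⟨h1, h2⟩, h3⟩ := hS
      rw [mem_NSC]
      constructor
      · intro x hx
        rw [Finset.mem_erase] at hx
        have hxn := h1 x hx.2
        rcases Nat.lt_or_ge x n with h | h
        · exact h
        · exfalso
          have hx1 : x = n ∨ x = n + 1 := by omega
          rcases hx1 with rfl | rfl
          · exact h2 x hx.2 h3
          · exact hx.1 rfl
      · intro k hk
        rw [Finset.mem_erase] at hk ⊢
        intro hc
        exact h2 k hk.2 hc.2
    case hj =>
      intro S hS
      rw [mem_NSC] at hS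
      simp only [mem_filter, mem_NSC]
      refine ⟨⟨?_, ?_⟩, by simp⟩
      · intro x hx
        rcases Finset.mem_insert.mp hx with rfl | hx
        · omega
        · have := hS.1 x hx; omega
      · intro k hk hc
        rcases Finset.mem_insert.mp hk with rfl | hk
        · rcases Finset.mem_insert.mp hc with h | h
          · omega
          · have := hS.1 _ h; omega
        · rcases Finset.mem_insert.mp hc with h | h
          · have := hS.1 _ hk; omega
          · exact hS.2 k hk h
    case li =>
      intro S hS
      simp only [mem_filter] at hS
      exact Finset.insert_erase hS.2
    case ri =>
      intro S hS
      rw [mem_NSC] at hS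
      apply Finset.erase_insert
      intro hc
      have := hS.1 _ hc; omega
  have h3 := Finset.card_filter_add_card_filter_not (s := NSC (n+2))
    (p := fun S => (n+1) ∈ S)
  rw [h1] at h3
  omega

lemma nsc_card : ∀ n, (NSC n).card = Nat.fib (n + 2)
  | 0 => by decide
  | 1 => by decide
  | (n+2) => by
      rw [nsc_rec, nsc_card (n+1), nsc_card n]
      have h := Nat.fib_add_two (n := n + 2)
      have e : Nat.fib (n+1+2) = Nat.fib (n+2+1) := by congr 1
      omega

lemma card_filter_union (s t : Finset ℕ) (h : Disjoint s t)
    (Q1 Q2 : Finset ℕ → Prop) [DecidablePred Q1] [DecidablePred Q2] :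
    ((s ∪ t).powerset.filter (fun A => Q1 (A ∩ s) ∧ Q2 (A ∩ t))).card =
      (s.powerset.filter Q1).card * (t.powerset.filter Q2).card := by
  classical
  rw [← Finset.card_product]
  have inter1 : ∀ P : Finset ℕ × Finset ℕ, P.1 ⊆ s → P.2 ⊆ t → (P.1 ∪ P.2) ∩ s = P.1 := by
    intro P hP1 hP2
    ext x
    simp only [Finset.mem_inter, Finset.mem_union]
    have h1 : x ∈ P.1 → x ∈ s := fun hx => hP1 hx
    have h2 : x ∈ P.2 → x ∉ s := fun hx hxs => (Finset.disjoint_left.mp h hxs) (hP2 hx)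
    tauto
  have inter2 : ∀ P : Finset ℕ × Finset ℕ, P.1 ⊆ s → P.2 ⊆ t → (P.1 ∪ P.2) ∩ t = P.2 := by
    intro P hP1 hP2
    ext x
    simp only [Finset.mem_inter, Finset.mem_union]
    have h1 : x ∈ P.2 → x ∈ t := fun hx => hP2 hx
    have h2 : x ∈ P.1 → x ∉ t := fun hx hxs => (Finset.disjoint_right.mp h hxs) (hP1 hx)
    tauto
  refine Finset.card_bij' (fun A _ => (A ∩ s, A ∩ t))
    (fun P _ => P.1 ∪ P.2) ?hi ?hj ?li ?ri
  case hi =>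
    intro A hA
    simp only [mem_filter, mem_powerset] at hA
    simp only [Finset.mem_product, mem_filter, mem_powerset]
    exact ⟨⟨Finset.inter_subset_right, hA.2.1⟩, ⟨Finset.inter_subset_right, hA.2.2⟩⟩
  case hj =>
    intro P hP
    simp only [Finset.mem_product, mem_filter, mem_powerset] at hP
    obtain ⟨⟨hP1, hQ1⟩, hP2, hQ2⟩ := hP
    simp only [mem_filter, mem_powerset, inter1 P hP1 hP2, inter2 P hP1 hP2]
    exact ⟨Finset.union_subset_union hP1 hP2, hQ1, hQ2⟩
  case li =>
    intro A hA
    simp only [mem_filter, mem_powerset] at hA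
    show A ∩ s ∪ A ∩ t = A
    rw [← Finset.inter_union_distrib_left, Finset.inter_eq_left.mpr hA.1]
  case ri =>
    intro P hP
    simp only [Finset.mem_product, mem_filter, mem_powerset] at hP
    obtain ⟨⟨hP1, _⟩, hP2, _⟩ := hP
    show ((P.1 ∪ P.2) ∩ s, (P.1 ∪ P.2) ∩ t) = P
    rw [inter1 P hP1 hP2, inter2 P hP1 hP2]

lemma card_filter_biUnion (ι : Finset ℕ) (B : ℕ → Finset ℕ)
    (Q : ℕ → Finset ℕ → Prop) [∀ p, DecidablePred (Q p)] :
    (Set.PairwiseDisjoint (↑ι) B) →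
    ((ι.biUnion B).powerset.filter (fun A => ∀ p ∈ ι, Q p (A ∩ B p))).card =
      ∏ p ∈ ι, ((B p).powerset.filter (Q p)).card := by
  classical
  induction ι using Finset.induction_on with
  | empty => simp
  | @insert p₀ ι' hp₀ ih =>
    intro hdisj
    rw [Finset.biUnion_insert]
    have hd : Disjoint (B p₀) (ι'.biUnion B) := by
      rw [Finset.disjoint_biUnion_right]
      intro p hp
      exact hdisj (by simp) (by simp [hp]) (by rintro rfl; exact hp₀ hp)
    have key : ∀ A ∈ (B p₀ ∪ ι'.biUnion B).powerset,
        ((∀ p ∈ insert p₀ ι', Q p (A ∩ B p)) ↔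
          (Q p₀ (A ∩ B p₀) ∧ (fun C => ∀ p ∈ ι', Q p (C ∩ B p)) (A ∩ ι'.biUnion B))) := by
      intro A hA
      simp only
      have inter_eq : ∀ p ∈ ι', (A ∩ ι'.biUnion B) ∩ B p = A ∩ B p := by
        intro p hp
        rw [Finset.inter_assoc]
        congr 1
        exact Finset.inter_eq_right.mpr (Finset.subset_biUnion_of_mem B hp)
      constructor
      · intro hall
        refine ⟨hall p₀ (by simp), fun p hp => ?_⟩
        rw [inter_eq p hp]
        exact hall p (by simp [hp])
      · rintro ⟨h1, h2⟩ p hp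
        rcases Finset.mem_insert.mp hp with rfl | hp
        · exact h1
        · rw [← inter_eq p hp]; exact h2 p hp
    rw [Finset.filter_congr key, Finset.prod_insert hp₀, ← ih (hdisj.subset (by simp))]
    exact card_filter_union (B p₀) (ι'.biUnion B) hd (Q p₀) (fun C => ∀ p ∈ ι', Q p (C ∩ B p))

def ptn (e d s : ℕ) : ℕ := if s ≤ e then e - s else e + d - s
def clsz (L e s : ℕ) : ℕ := if s ≤ e then L + 2 else L + 1
def blk (d e L s : ℕ) : Finset ℕ :=
  ((Finset.range (clsz L e s)).image fun α => s + α * d) ∪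
  ((Finset.range (clsz L e s)).image fun β => ptn e d s + β * d)
def reps (d e : ℕ) : Finset ℕ := (Finset.range d).filter fun s => s < ptn e d s

section basic
variable {d e L s : ℕ} (hed : e < d) (He : e % 2 = 1) (Hd : d % 2 = 0)

include hed in
lemma ptn_lt (hs : s < d) : ptn e d s < d := by unfold ptn; split_ifs <;> omega

include hed in
lemma ptn_ptn (hs : s < d) : ptn e d (ptn e d s) = s := by
  unfold ptn; split_ifs <;> omega

include He Hd in
lemma ptn_ne (hs : s < d) : ptn e d s ≠ s := by
  unfold ptn; split_ifs <;> omega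

lemma clsz_ptn (hs : s < d) : clsz L e (ptn e d s) = clsz L e s := by
  unfold clsz ptn; split_ifs <;> omega

include hed in
/-- the sum dichotomy -/
lemma ptn_sum (hs : s < d) :
    (s + ptn e d s = e ∧ s ≤ e ∧ ptn e d s ≤ e ∧ clsz L e s = L + 2) ∨
    (s + ptn e d s = e + d ∧ e < s ∧ e < ptn e d s ∧ clsz L e s = L + 1) := by
  unfold ptn clsz; split_ifs <;> [left; right] <;> omega

include hed in
/-- size bound: `s + α*d ≤ d*L + e + d ↔ α < clsz L e s` -/
lemma clsz_bound (hs : s < d) (α : ℕ) :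
    s + α * d ≤ d * L + e + d ↔ α < clsz L e s := by
  unfold clsz
  have h1 : (L+1) * d = L * d + d := by ring
  have h2 : (L+2) * d = L * d + 2 * d := by ring
  have h3 : d * L = L * d := by ring
  split_ifs with h
  · constructor
    · intro hle
      by_contra hc
      have : L + 2 ≤ α := by omega
      have := Nat.mul_le_mul_right d this
      omega
    · intro hlt
      have : α ≤ L + 1 := by omega
      have := Nat.mul_le_mul_right d this
      omega
  · constructor
    · intro hle
      by_contra hc
      have : L + 1 ≤ α := by omega
      have := Nat.mul_le_mul_right d this
      omega
    · intro hlt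
      have : α ≤ L := by omega
      have := Nat.mul_le_mul_right d this
      omega

lemma mem_blk {x : ℕ} :
    x ∈ blk d e L s ↔ ∃ α < clsz L e s, x = s + α * d ∨ x = ptn e d s + α * d := by
  unfold blk
  simp only [Finset.mem_union, Finset.mem_image, Finset.mem_range]
  constructor
  · rintro (⟨α, hα, rfl⟩ | ⟨α, hα, rfl⟩)
    · exact ⟨α, hα, Or.inl rfl⟩
    · exact ⟨α, hα, Or.inr rfl⟩
  · rintro ⟨α, hα, rfl | rfl⟩
    · exact Or.inl ⟨α, hα, rfl⟩
    · exact Or.inr ⟨α, hα, rfl⟩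

include hed in
lemma blk_residue (hs : s < d) {x : ℕ} (hx : x ∈ blk d e L s) :
    (x % d = s ∨ x % d = ptn e d s) ∧ x ≤ d * L + e + d := by
  rw [mem_blk] at hx
  obtain ⟨α, hα, rfl | rfl⟩ := hx
  · constructor
    · left; rw [Nat.add_mul_mod_self_right, Nat.mod_eq_of_lt hs]
    · exact (clsz_bound hed hs α).mpr hα
  · have hps := ptn_lt hed (e := e) hs
    constructor
    · right; rw [Nat.add_mul_mod_self_right, Nat.mod_eq_of_lt hps]
    · exact (clsz_bound (L := L) hed hps α).mpr
        (by rw [clsz_ptn (L := L) (e := e) hs]; exact hα)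

include hed in
lemma mem_blk_of_residue (hs : s < d) {x : ℕ} (hxj : x ≤ d * L + e + d)
    (hr : x % d = s ∨ x % d = ptn e d s) : x ∈ blk d e L s := by
  rw [mem_blk]
  have hx := Nat.mod_add_div x d
  have hc : d * (x / d) = (x / d) * d := by ring
  rcases hr with hr | hr
  · refine ⟨x / d, ?_, Or.inl (by omega)⟩
    rw [← (clsz_bound hed hs (x/d))]
    omega
  · have hps := ptn_lt hed (e := e) hs
    refine ⟨x / d, ?_, Or.inr (by omega)⟩
    rw [← clsz_ptn (L := L) (e := e) hs, ← (clsz_bound hed hps (x/d))]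
    omega

end basic

section decomp
variable {d e L : ℕ} (hd0 : 0 < d) (hed : e < d) (He : e % 2 = 1) (Hd : d % 2 = 0)

lemma mem_reps {s : ℕ} : s ∈ reps d e ↔ s < d ∧ s < ptn e d s := by
  simp [reps, Finset.mem_filter, Finset.mem_range, and_comm]

include hed He Hd in
lemma rep_spec (u : ℕ) (hu : u < d) :
    ∃ r ∈ reps d e, u = r ∨ u = ptn e d r := by
  have h1 := ptn_lt hed (e := e) hu
  have h2 := ptn_ptn hed (e := e) hu
  have h3 := ptn_ne He Hd (e := e) hu
  rcases Nat.lt_or_ge u (ptn e d u) with h | h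
  · exact ⟨u, mem_reps.mpr ⟨hu, h⟩, Or.inl rfl⟩
  · refine ⟨ptn e d u, mem_reps.mpr ⟨h1, ?_⟩, Or.inr h2.symm⟩
    rw [h2]; omega

include hed He Hd in
lemma biUnion_blk :
    (reps d e).biUnion (blk d e L) = Finset.range (d * L + e + d + 1) := by
  ext x
  simp only [Finset.mem_biUnion, Finset.mem_range]
  constructor
  · rintro ⟨s, hs, hx⟩
    rw [mem_reps] at hs
    have := (blk_residue hed hs.1 hx).2
    omega
  · intro hx
    have hu : x % d < d := Nat.mod_lt _ (by omega)
    obtain ⟨r, hr, hcase⟩ := rep_spec hed He Hd (x % d) hu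
    refine ⟨r, hr, mem_blk_of_residue hed (mem_reps.mp hr).1 (by omega) ?_⟩
    tauto

include hed He Hd in
lemma blk_pairwise : Set.PairwiseDisjoint (↑(reps d e)) (blk d e L) := by
  intro s hs s' hs' hne
  rw [Finset.mem_coe, mem_reps] at hs hs'
  rw [Function.onFun]
  rw [Finset.disjoint_left]
  intro x hx hx'
  have r1 := (blk_residue hed hs.1 hx).1
  have r2 := (blk_residue hed hs'.1 hx').1
  have pp : ptn e d (ptn e d s) = s := ptn_ptn hed hs.1
  have pp' : ptn e d (ptn e d s') = s' := ptn_ptn hed hs'.1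
  rcases r1 with r1 | r1 <;> rcases r2 with r2 | r2
  · exact hne (by omega)
  · have h4 : s = ptn e d s' := by omega
    have h5 : ptn e d s = s' := by rw [h4, pp']
    omega
  · have h4 : s' = ptn e d s := by omega
    have h5 : ptn e d s' = s := by rw [h4, pp]
    omega
  · have h4 : ptn e d s = ptn e d s' := by omega
    exact hne (by rw [← pp, h4, pp'])

include hed in
lemma sum_residue {x y M : ℕ} (hxy : x + y = d * M + e) :
    y % d = ptn e d (x % d) := by
  have hd0 : 0 < d := by omega
  have hu : x % d < d := Nat.mod_lt _ hd0
  have hv : y % d < d := Nat.mod_lt _ hd0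
  have key : (x % d + y % d) % d = e := by
    rw [← Nat.add_mod, hxy, Nat.mul_add_mod, Nat.mod_eq_of_lt hed]
  have key2 : x % d + y % d = e ∨ x % d + y % d = e + d := by
    rcases Nat.lt_or_ge (x % d + y % d) d with h | h
    · left; rwa [Nat.mod_eq_of_lt h] at key
    · right
      rw [Nat.mod_eq_sub_mod h, Nat.mod_eq_of_lt (by omega)] at key
      omega
  unfold ptn; split_ifs <;> omega

end decomp

def posf (d e L s x : ℕ) : ℕ :=
  if x % d = s then 2 * (clsz L e s - 1 - (x - s)/d) else 2 * ((x - ptn e d s)/d) + 1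
def iposf (d e L s p : ℕ) : ℕ :=
  if p % 2 = 0 then s + (clsz L e s - 1 - p/2) * d else ptn e d s + (p/2) * d

section perblock
variable {d e L s : ℕ} (hed : e < d) (He : e % 2 = 1) (Hd : d % 2 = 0) (hs : s < d)

include hs in
lemma posf_s {α : ℕ} : posf d e L s (s + α * d) = 2 * (clsz L e s - 1 - α) := by
  unfold posf
  rw [if_pos (by rw [Nat.add_mul_mod_self_right, Nat.mod_eq_of_lt hs])]
  congr 2
  rw [Nat.add_sub_cancel_left, Nat.mul_div_cancel _ (by omega)]

include hed He Hd hs in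
lemma posf_t {β : ℕ} :
    posf d e L s (ptn e d s + β * d) = 2 * β + 1 := by
  have ht : ptn e d s < d := ptn_lt hed hs
  have hne : ptn e d s ≠ s := ptn_ne He Hd hs
  unfold posf
  rw [if_neg (by rw [Nat.add_mul_mod_self_right, Nat.mod_eq_of_lt ht]; exact hne)]
  rw [Nat.add_sub_cancel_left, Nat.mul_div_cancel _ (by omega)]

include hed in
lemma clsz_pos : 1 ≤ clsz L e s := by unfold clsz; split_ifs <;> omega

include Hd He in
lemma same_res_not {u α β : ℕ} :
    (u + α * d) + (u + β * d) ≠ d * L + e ∧ (u + α * d) + (u + β * d) ≠ d * L + e + d := by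
  obtain ⟨d2, hd2⟩ : ∃ d2, d = 2 * d2 := ⟨d / 2, by omega⟩
  have e1 : α * d = 2 * (α * d2) := by rw [hd2]; ring
  have e2 : β * d = 2 * (β * d2) := by rw [hd2]; ring
  have e3 : d * L = 2 * (d2 * L) := by rw [hd2]; ring
  omega

include hed hs in
lemma adj_iff {α β : ℕ} (hα : α < clsz L e s) (hβ : β < clsz L e s) :
    ((s + α * d) + (ptn e d s + β * d) = d * L + e ∨
      (s + α * d) + (ptn e d s + β * d) = d * L + e + d) ↔
    (α + β = clsz L e s - 2 ∨ α + β = clsz L e s - 1) := by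
  have hd0 : 0 < d := by omega
  have hr : (s + α * d) + (ptn e d s + β * d) = (s + ptn e d s) + (α + β) * d := by ring
  have hdl : d * L = L * d := by ring
  rcases ptn_sum hed hs (L := L) with ⟨hsum, _, _, ha⟩ | ⟨hsum, _, _, ha⟩
  · constructor
    · rintro (h | h)
      · have h2 : (α + β) * d = L * d := by omega
        have := Nat.eq_of_mul_eq_mul_right hd0 h2
        omega
      · have h2 : (α + β) * d = (L + 1) * d := by
          have : (L+1) * d = L * d + d := by ring
          omega
        have := Nat.eq_of_mul_eq_mul_right hd0 h2
        omega
    · rintro (h | h)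
      · left
        have h2 : α + β = L := by omega
        rw [hr, hsum, h2]; omega
      · right
        have h2 : α + β = L + 1 := by omega
        have h3 : (L + 1) * d = L * d + d := by ring
        rw [hr, hsum, h2]; omega
  · constructor
    · rintro (h | h)
      · have h2 : (α + β + 1) * d = L * d := by
          have : (α + β + 1) * d = (α + β) * d + d := by ring
          omega
        have := Nat.eq_of_mul_eq_mul_right hd0 h2
        omega
      · have h2 : (α + β + 1) * d = (L + 1) * d := by
          have e1 : (α + β + 1) * d = (α + β) * d + d := by ring
          have e2 : (L + 1) * d = L * d + d := by ring
          omega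
        have := Nat.eq_of_mul_eq_mul_right hd0 h2
        omega
    · rintro (h | h)
      · rcases Nat.eq_zero_or_pos L with hL | hL
        · right
          have h2 : α + β = 0 := by omega
          rw [hr, hsum, h2, hL]; omega
        · left
          have h2 : α + β = L - 1 := by omega
          have h3 : (L - 1) * d = L * d - d := by
            cases L with
            | zero => omega
            | succ n =>
                have e5 : (n + 1) * d = n * d + d := by ring
                simp only [Nat.succ_sub_one]
                omega
          have h4 : d ≤ L * d := by
            calc d = 1 * d := by ring
            _ ≤ L * d := Nat.mul_le_mul_right d hL
          rw [hr, hsum, h2]; omega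
      · right
        have h2 : α + β = L := by omega
        rw [hr, hsum, h2]; omega

end perblock

section blkcard
variable {d e L s : ℕ} (hed : e < d) (He : e % 2 = 1) (Hd : d % 2 = 0) (hs : s < d)

include hed He Hd hs in
lemma blk_card :
    ((blk d e L s).powerset.filter
      (fun C => (d*L+e) ∉ C + C ∧ (d*L+e+d) ∉ C + C)).card
      = Nat.fib (2 * clsz L e s + 2) := by
  classical
  have hd0 : 0 < d := by omega
  have ht : ptn e d s < d := ptn_lt hed hs
  have ha1 : 1 ≤ clsz L e s := clsz_pos (e := e) (L := L) (s := s) hed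
  have hpi : ∀ p < 2 * clsz L e s, posf d e L s (iposf d e L s p) = p := by
    intro p hp
    unfold iposf
    split_ifs with h
    · rw [posf_s hs]; omega
    · rw [posf_t hed He Hd hs]; omega
  have hip : ∀ x ∈ blk d e L s, iposf d e L s (posf d e L s x) = x := by
    intro x hx
    rw [mem_blk] at hx
    obtain ⟨α, hα, rfl | rfl⟩ := hx
    · rw [posf_s hs]
      unfold iposf
      rw [if_pos (by omega)]
      have h2 : clsz L e s - 1 - (2 * (clsz L e s - 1 - α))/2 = α := by omega
      rw [h2]
    · rw [posf_t hed He Hd hs]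
      unfold iposf
      rw [if_neg (by omega)]
      have h2 : (2 * α + 1) / 2 = α := by omega
      rw [h2]
  have hiposmem : ∀ p < 2 * clsz L e s, iposf d e L s p ∈ blk d e L s := by
    intro p hp
    rw [mem_blk]
    unfold iposf
    split_ifs with h
    · exact ⟨clsz L e s - 1 - p/2, by omega, Or.inl rfl⟩
    · exact ⟨p/2, by omega, Or.inr rfl⟩
  have hposlt : ∀ x ∈ blk d e L s, posf d e L s x < 2 * clsz L e s := by
    intro x hx
    rw [mem_blk] at hx
    obtain ⟨α, hα, rfl | rfl⟩ := hx
    · rw [posf_s hs]; omega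
    · rw [posf_t hed He Hd hs]; omega
  have hadj : ∀ x ∈ blk d e L s, ∀ y ∈ blk d e L s,
      ((x + y = d*L+e ∨ x + y = d*L+e+d) ↔
        (posf d e L s y = posf d e L s x + 1 ∨
          posf d e L s x = posf d e L s y + 1)) := by
    intro x hx y hy
    rw [mem_blk] at hx hy
    obtain ⟨α, hα, rfl | rfl⟩ := hx <;> obtain ⟨β, hβ, rfl | rfl⟩ := hy
    · have h1 := same_res_not (He := He) (Hd := Hd) (u := s) (α := α) (β := β) (L := L)
      rw [posf_s hs, posf_s hs]
      constructor
      · rintro (h | h)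
        · exact absurd h h1.1
        · exact absurd h h1.2
      · rintro (h | h) <;> omega
    · rw [posf_s hs, posf_t hed He Hd hs, adj_iff hed hs hα hβ]
      omega
    · rw [posf_t hed He Hd hs, posf_s hs]
      have hc : (ptn e d s + α * d) + (s + β * d) = (s + β * d) + (ptn e d s + α * d) := by
        ring
      rw [hc, adj_iff hed hs hβ hα]
      omega
    · have h1 := same_res_not (He := He) (Hd := Hd) (u := ptn e d s) (α := α) (β := β) (L := L)
      rw [posf_t hed He Hd hs, posf_t hed He Hd hs]
      constructor
      · rintro (h | h)
        · exact absurd h h1.1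
        · exact absurd h h1.2
      · rintro (h | h) <;> omega
  rw [← nsc_card (2 * clsz L e s)]
  refine Finset.card_bij' (fun C _ => C.image (posf d e L s))
    (fun S _ => S.image (iposf d e L s)) ?hi ?hj ?li ?ri
  case hi =>
    intro C hC
    simp only [mem_filter, mem_powerset] at hC
    obtain ⟨hCsub, hQ1, hQ2⟩ := hC
    rw [mem_NSC]
    constructor
    · intro p hp
      rw [Finset.mem_image] at hp
      obtain ⟨x, hx, rfl⟩ := hp
      exact hposlt x (hCsub hx)
    · intro p hp hp1
      rw [Finset.mem_image] at hp hp1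
      obtain ⟨x, hx, rfl⟩ := hp
      obtain ⟨y, hy, hyx⟩ := hp1
      rcases (hadj x (hCsub hx) y (hCsub hy)).mpr (Or.inl hyx) with h | h
      · exact hQ1 (Finset.mem_add.mpr ⟨x, hx, y, hy, h⟩)
      · exact hQ2 (Finset.mem_add.mpr ⟨x, hx, y, hy, h⟩)
  case hj =>
    intro S hS
    rw [mem_NSC] at hS
    obtain ⟨hb, hcons⟩ := hS
    simp only [mem_filter, mem_powerset]
    refine ⟨?_, ?_, ?_⟩
    · intro x hx
      rw [Finset.mem_image] at hx
      obtain ⟨p, hp, rfl⟩ := hx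
      exact hiposmem p (hb p hp)
    · intro hc
      rw [Finset.mem_add] at hc
      obtain ⟨x, hx, y, hy, hxy⟩ := hc
      rw [Finset.mem_image] at hx hy
      obtain ⟨p, hp, rfl⟩ := hx
      obtain ⟨q, hq, rfl⟩ := hy
      have h1 := (hadj _ (hiposmem p (hb p hp)) _ (hiposmem q (hb q hq))).mp (Or.inl hxy)
      rw [hpi p (hb p hp), hpi q (hb q hq)] at h1
      rcases h1 with h | h
      · exact hcons p hp (h ▸ hq)
      · exact hcons q hq (h ▸ hp)
    · intro hc
      rw [Finset.mem_add] at hc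
      obtain ⟨x, hx, y, hy, hxy⟩ := hc
      rw [Finset.mem_image] at hx hy
      obtain ⟨p, hp, rfl⟩ := hx
      obtain ⟨q, hq, rfl⟩ := hy
      have h1 := (hadj _ (hiposmem p (hb p hp)) _ (hiposmem q (hb q hq))).mp (Or.inr hxy)
      rw [hpi p (hb p hp), hpi q (hb q hq)] at h1
      rcases h1 with h | h
      · exact hcons p hp (h ▸ hq)
      · exact hcons q hq (h ▸ hp)
  case li =>
    intro C hC
    simp only [mem_filter, mem_powerset] at hC
    show ((C.image (posf d e L s)).image (iposf d e L s)) = C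
    rw [Finset.image_image]
    have : C.image (iposf d e L s ∘ posf d e L s) = C.image id :=
      Finset.image_congr (fun x hx => hip x (hC.1 hx))
    rw [this, Finset.image_id]
  case ri =>
    intro S hS
    rw [mem_NSC] at hS
    show ((S.image (iposf d e L s)).image (posf d e L s)) = S
    rw [Finset.image_image]
    have : S.image (posf d e L s ∘ iposf d e L s) = S.image id :=
      Finset.image_congr (fun p hp => hpi p (hS.1 p hp))
    rw [this, Finset.image_id]

end blkcard

section assemble
variable {d e L : ℕ} (hed : e < d) (He : e % 2 = 1) (Hd : d % 2 = 0)

include hed He Hd in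
lemma pred_decomp {A : Finset ℕ} (hA : A ⊆ Finset.range (d*L+e+d+1)) :
    ((d*L+e) ∉ A + A ∧ (d*L+e+d) ∉ A + A) ↔
    (∀ s ∈ reps d e,
      (d*L+e) ∉ (A ∩ blk d e L s) + (A ∩ blk d e L s) ∧
      (d*L+e+d) ∉ (A ∩ blk d e L s) + (A ∩ blk d e L s)) := by
  constructor
  · intro h s _
    constructor
    · intro hc
      rw [Finset.mem_add] at hc
      obtain ⟨x, hx, y, hy, hxy⟩ := hc
      exact h.1 (Finset.mem_add.mpr
        ⟨x, (Finset.mem_inter.mp hx).1, y, (Finset.mem_inter.mp hy).1, hxy⟩)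
    · intro hc
      rw [Finset.mem_add] at hc
      obtain ⟨x, hx, y, hy, hxy⟩ := hc
      exact h.2 (Finset.mem_add.mpr
        ⟨x, (Finset.mem_inter.mp hx).1, y, (Finset.mem_inter.mp hy).1, hxy⟩)
  · intro h
    have main : ∀ M, (M = L ∨ M = L + 1) →
        (d*M+e) ∉ A + A := by
      intro M hM hc
      rw [Finset.mem_add] at hc
      obtain ⟨x, hx, y, hy, hxy⟩ := hc
      have hd0 : 0 < d := by omega
      have hxd : x % d < d := Nat.mod_lt _ hd0
      have hv : y % d = ptn e d (x % d) := sum_residue hed hxy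
      obtain ⟨r, hr, hcase⟩ := rep_spec hed He Hd (x % d) hxd
      have hrd : r < d := (mem_reps.mp hr).1
      have hxj : x ≤ d*L+e+d := by
        have := hA hx; rw [Finset.mem_range] at this
        rcases hM with rfl | rfl <;> omega
      have hyj : y ≤ d*L+e+d := by
        have := hA hy; rw [Finset.mem_range] at this
        rcases hM with rfl | rfl <;> omega
      have hxb : x ∈ blk d e L r := mem_blk_of_residue hed hrd hxj (by tauto)
      have hyb : y ∈ blk d e L r := by
        refine mem_blk_of_residue hed hrd hyj ?_
        rcases hcase with hh | hh
        · right; rw [hv, hh]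
        · left; rw [hv, hh, ptn_ptn hed hrd]
      have hQ := h r hr
      rcases hM with rfl | rfl
      · exact hQ.1 (Finset.mem_add.mpr
          ⟨x, Finset.mem_inter.mpr ⟨hx, hxb⟩, y, Finset.mem_inter.mpr ⟨hy, hyb⟩, hxy⟩)
      · refine hQ.2 (Finset.mem_add.mpr
          ⟨x, Finset.mem_inter.mpr ⟨hx, hxb⟩, y, Finset.mem_inter.mpr ⟨hy, hyb⟩, ?_⟩)
        have : d * (L + 1) = d * L + d := by ring
        omega
    constructor
    · exact main L (Or.inl rfl)
    · have := main (L+1) (Or.inr rfl)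
      have h2 : d * (L + 1) = d * L + d := by ring
      rw [h2] at this
      rwa [show d*L+d+e = d*L+e+d from by omega] at this

include hed He in
lemma reps_filter_le :
    (reps d e).filter (fun s => s ≤ e) = Finset.range ((e+1)/2) := by
  ext s
  simp only [reps, Finset.mem_filter, Finset.mem_range]; simp only [ptn]
  rcases le_or_gt s e with h | h
  · rw [if_pos h]; omega
  · rw [if_neg (by omega)]; omega

include hed He Hd in
lemma reps_filter_gt :
    (reps d e).filter (fun s => ¬ s ≤ e) = Finset.Ico (e+1) ((e+d+1)/2) := by
  ext s
  simp only [reps, Finset.mem_filter, Finset.mem_range, Finset.mem_Ico]; simp only [ptn]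
  rcases le_or_gt s e with h | h
  · rw [if_pos h]; omega
  · rw [if_neg (by omega)]; omega

include hed He Hd in
lemma prod_blk_card :
    ∏ s ∈ reps d e, Nat.fib (2 * clsz L e s + 2) =
      Nat.fib (2*L+4) ^ ((e+d+1)/2 - (e+1)) * Nat.fib (2*L+6) ^ ((e+1)/2) := by
  rw [← Finset.prod_filter_mul_prod_filter_not (reps d e) (fun s => s ≤ e)]
  have h1 : ∀ s ∈ (reps d e).filter (fun s => s ≤ e),
      Nat.fib (2 * clsz L e s + 2) = Nat.fib (2*L+6) := by
    intro s hsm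
    rw [Finset.mem_filter] at hsm
    unfold clsz
    rw [if_pos hsm.2, show 2*(L+2)+2 = 2*L+6 from by ring]
  have h2 : ∀ s ∈ (reps d e).filter (fun s => ¬ s ≤ e),
      Nat.fib (2 * clsz L e s + 2) = Nat.fib (2*L+4) := by
    intro s hsm
    rw [Finset.mem_filter] at hsm
    unfold clsz
    rw [if_neg hsm.2, show 2*(L+1)+2 = 2*L+4 from by ring]
  rw [Finset.prod_congr rfl h1, Finset.prod_congr rfl h2, Finset.prod_const,
    Finset.prod_const, reps_filter_le hed He, reps_filter_gt hed He Hd,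
    Finset.card_range, Nat.card_Ico]
  ring

include hed He Hd in
theorem count_core :
    (((Finset.range (d*L+e+d+1)).powerset.filter
        (fun A : Finset ℕ => (d*L+e) ∉ A + A ∧ (d*L+e+d) ∉ A + A)).card) =
      Nat.fib (2*L+4) ^ ((e+d+1)/2 - (e+1)) * Nat.fib (2*L+6) ^ ((e+1)/2) := by
  classical
  rw [← biUnion_blk hed He Hd (L := L)]
  rw [Finset.filter_congr (fun A hA => pred_decomp hed He Hd
      (by rwa [Finset.mem_powerset, biUnion_blk hed He Hd (L := L)] at hA))]
  rw [card_filter_biUnion (reps d e) (blk d e L)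
      (fun _ C => (d*L+e) ∉ C + C ∧ (d*L+e+d) ∉ C + C) (blk_pairwise hed He Hd)]
  rw [Finset.prod_congr rfl (fun s hsm => blk_card hed He Hd (mem_reps.mp hsm).1)]
  exact prod_blk_card hed He Hd

end assemble

/-- For odd positive integers `i < j`, the number of subsets `A ⊆ {0,...,j}` with
`i ∉ A + A` and `j ∉ A + A` equals `F_{q+2}^r · F_{q+4}^{r'}`, where
`q = 2⌈(i+1)/(j-i)⌉`, `r = ((j-i)⌈(i+1)/(j-i)⌉ - (i+1))/2`,
`r' = (j+1 - (j-i)⌈(i+1)/(j-i)⌉)/2` and `F` is the Fibonacci sequence (`F₁ = F₂ = 1`).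
Equivalently, for a uniformly random subset `A` of `{0,...,j}`, the probability that
neither `i` nor `j` lies in `A + A` is `F_{q+2}^r · F_{q+4}^{r'} / 2^(j+1)`. -/
theorem count_miss_two_sums (i j : ℕ) (hi : Odd i) (hj : Odd j) (h0 : 0 < i)
    (hij : i < j) :
    (((Finset.range (j + 1)).powerset.filter
        (fun A : Finset ℕ => i ∉ A + A ∧ j ∉ A + A)).card =
      Nat.fib (2 * ((i + 1 + (j - i) - 1) / (j - i)) + 2) ^
          (((j - i) * ((i + 1 + (j - i) - 1) / (j - i)) - (i + 1)) / 2) *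
        Nat.fib (2 * ((i + 1 + (j - i) - 1) / (j - i)) + 4) ^
          ((j + 1 - (j - i) * ((i + 1 + (j - i) - 1) / (j - i))) / 2)) ∧
    ((((Finset.range (j + 1)).powerset.filter
        (fun A : Finset ℕ => i ∉ A + A ∧ j ∉ A + A)).card : ℚ) / 2 ^ (j + 1) =
      (Nat.fib (2 * ((i + 1 + (j - i) - 1) / (j - i)) + 2) ^
          (((j - i) * ((i + 1 + (j - i) - 1) / (j - i)) - (i + 1)) / 2) *
        Nat.fib (2 * ((i + 1 + (j - i) - 1) / (j - i)) + 4) ^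
          ((j + 1 - (j - i) * ((i + 1 + (j - i) - 1) / (j - i))) / 2) : ℚ) /
        2 ^ (j + 1)) := by
  classical
  obtain ⟨d, hd⟩ : ∃ d, j = i + d := ⟨j - i, by omega⟩
  have hd0 : 0 < d := by omega
  have hi2 : i % 2 = 1 := Nat.odd_iff.mp hi
  have hj2 : j % 2 = 1 := Nat.odd_iff.mp hj
  have Hd : d % 2 = 0 := by omega
  set e := i % d with he
  set L := i / d with hL
  have hie : d * L + e = i := Nat.div_add_mod i d
  have hed : e < d := Nat.mod_lt _ hd0
  have He : e % 2 = 1 := by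
    obtain ⟨d2, hd2⟩ : ∃ d2, d = 2 * d2 := ⟨d / 2, by omega⟩
    have hdl : d * L = 2 * (d2 * L) := by rw [hd2]; ring
    omega
  have hji : j - i = d := by omega
  have hm : (i + 1 + (j - i) - 1) / (j - i) = L + 1 := by
    rw [hji]
    have h1 : i + 1 + d - 1 = e + (L + 1) * d := by
      have h2 : (L + 1) * d = L * d + d := by ring
      have h3 : d * L = L * d := by ring
      omega
    rw [h1, Nat.add_mul_div_right _ _ hd0, Nat.div_eq_of_lt hed]
    omega
  have hr1 : ((j - i) * (L + 1) - (i + 1)) / 2 = (e + d + 1) / 2 - (e + 1) := by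
    rw [hji]
    have h2 : d * (L + 1) = d * L + d := by ring
    omega
  have hr2 : (j + 1 - (j - i) * (L + 1)) / 2 = (e + 1) / 2 := by
    rw [hji]
    have h2 : d * (L + 1) = d * L + d := by ring
    omega
  have hcount : ((Finset.range (j + 1)).powerset.filter
      (fun A : Finset ℕ => i ∉ A + A ∧ j ∉ A + A)).card =
      Nat.fib (2 * ((i + 1 + (j - i) - 1) / (j - i)) + 2) ^
          (((j - i) * ((i + 1 + (j - i) - 1) / (j - i)) - (i + 1)) / 2) *
        Nat.fib (2 * ((i + 1 + (j - i) - 1) / (j - i)) + 4) ^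
          ((j + 1 - (j - i) * ((i + 1 + (j - i) - 1) / (j - i))) / 2) := by
    rw [hm, hr1, hr2,
      show 2 * (L + 1) + 2 = 2 * L + 4 from by ring,
      show 2 * (L + 1) + 4 = 2 * L + 6 from by ring,
      show j = d * L + e + d from by omega, ← hie]
    exact count_core hed He Hd
  exact ⟨hcount, by rw [hcount]; push_cast; ring⟩
end

section
/- For every even positive integer k and n > k, the number of subsets A ⊆ {0,1,...,n−1} whose sumset A+A misses exactly the first k elements of [0, 2n−2] (i.e., A + A = [k, 2n−2]) is at least 2^{n − k/2 − 10}. Consequently, the probability that |[0,2n−2] \ (A+A)| = k for uniformly random A ⊆ {0,...,n−1} is at least 2^{−k/2 − 10}. -/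
open scoped Pointwise

section CountMissingAux

open Finset

lemma count_avoid {ι : Type} [DecidableEq ι] (f : ι → Finset ℕ) (J : Finset ι) :
    ∀ (F : Finset ℕ), (∀ j ∈ J, f j ⊆ F) →
      (∀ i ∈ J, ∀ j ∈ J, i ≠ j → Disjoint (f i) (f j)) →
      ((F.powerset.filter (fun B => ∀ j ∈ J, ¬ f j ⊆ B)).card) * 2 ^ (∑ j ∈ J, (f j).card)
        ≤ 2 ^ F.card * ∏ j ∈ J, (2 ^ (f j).card - 1) := by
  induction J using Finset.induction_on with
  | empty => intro F _ _; simp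
  | @insert a J' ha ih =>
    intro F hsub hdisj
    have hfaF : f a ⊆ F := hsub a (mem_insert_self a J')
    set T1 := (f a).powerset.erase (f a) with hT1
    set T2 := ((F \ f a).powerset.filter (fun B => ∀ j ∈ J', ¬ f j ⊆ B)) with hT2
    have key : (F.powerset.filter (fun B => ∀ j ∈ insert a J', ¬ f j ⊆ B)).card ≤ T1.card * T2.card := by
      rw [← Finset.card_product]
      apply Finset.card_le_card_of_injOn (fun B => (B ∩ f a, B \ f a))
      · intro B hB
        simp only [mem_coe, mem_filter, mem_powerset] at hB
        obtain ⟨hBF, hcon⟩ := hB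
        simp only [mem_coe, mem_product, hT1, hT2, mem_erase, mem_powerset, mem_filter]
        refine ⟨⟨?_, inter_subset_right⟩, ?_, ?_⟩
        · intro h
          have : f a ⊆ B := by
            rw [Finset.inter_eq_right] at h; exact h
          exact hcon a (mem_insert_self a J') this
        · exact sdiff_subset_sdiff hBF (le_refl _)
        · intro j hj hsubj
          exact hcon j (mem_insert_of_mem hj) (hsubj.trans sdiff_subset)
      · intro B hB C hC h
        simp only [Prod.mk.injEq] at h
        have h2 : B ∩ f a ∪ B \ f a = C ∩ f a ∪ C \ f a := by rw [h.1, h.2]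
        rwa [union_comm, Finset.sdiff_union_inter, union_comm, Finset.sdiff_union_inter] at h2
    have hT1card : T1.card = 2 ^ (f a).card - 1 := by
      rw [hT1, Finset.card_erase_of_mem (Finset.mem_powerset_self _), Finset.card_powerset]
    have hrec : T2.card * 2 ^ (∑ j ∈ J', (f j).card) ≤ 2 ^ (F \ f a).card * ∏ j ∈ J', (2 ^ (f j).card - 1) := by
      apply ih
      · intro j hj
        refine Finset.subset_sdiff.mpr ⟨hsub j (mem_insert_of_mem hj), ?_⟩
        exact (hdisj j (mem_insert_of_mem hj) a (mem_insert_self a J') (fun h => ha (h ▸ hj)))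
      · intro i hi j hj hij
        exact hdisj i (mem_insert_of_mem hi) j (mem_insert_of_mem hj) hij
    rw [Finset.sum_insert ha, Finset.prod_insert ha]
    have hpow : 2 ^ (F \ f a).card * 2 ^ (f a).card = 2 ^ F.card := by
      rw [← pow_add, Finset.card_sdiff_add_card_eq_card hfaF]
    calc (filter (fun B => ∀ j ∈ insert a J', ¬f j ⊆ B) F.powerset).card * 2 ^ ((f a).card + ∑ j ∈ J', (f j).card)
        = (filter (fun B => ∀ j ∈ insert a J', ¬f j ⊆ B) F.powerset).card * 2 ^ (∑ j ∈ J', (f j).card) * 2 ^ (f a).card := by ring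
      _ ≤ (T1.card * T2.card) * 2 ^ (∑ j ∈ J', (f j).card) * 2 ^ (f a).card := by
          exact Nat.mul_le_mul_right _ (Nat.mul_le_mul_right _ key)
      _ = T1.card * (T2.card * 2 ^ (∑ j ∈ J', (f j).card)) * 2 ^ (f a).card := by ring
      _ ≤ T1.card * (2 ^ (F \ f a).card * ∏ j ∈ J', (2 ^ (f j).card - 1)) * 2 ^ (f a).card := by
          exact Nat.mul_le_mul_right _ (Nat.mul_le_mul_left _ hrec)
      _ = (2 ^ (F \ f a).card * 2 ^ (f a).card) * (T1.card * ∏ j ∈ J', (2 ^ (f j).card - 1)) := by ring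
      _ = 2 ^ F.card * ((2 ^ (f a).card - 1) * ∏ j ∈ J', (2 ^ (f j).card - 1)) := by rw [hpow, hT1card]

lemma geom_aux : ∀ N : ℕ, (∑ r ∈ range N, ((3:ℚ)/4)^(r/2)) + 4*((3:ℚ)/4)^((N+1)/2) + 4*((3:ℚ)/4)^(N/2) ≤ 8 := by
  intro N
  induction N with
  | zero => norm_num
  | succ N ih =>
    rw [Finset.sum_range_succ]
    rcases Nat.even_or_odd N with ⟨t, ht⟩ | ⟨t, ht⟩
    · have h1 : N / 2 = t := by omega
      have h2 : (N+1) / 2 = t := by omega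
      have h3 : (N+1+1) / 2 = t+1 := by omega
      rw [h1, h2] at ih
      rw [h2, h3, h1]
      have hp : ((3:ℚ)/4)^(t+1) = (3/4) * (3/4)^t := by ring
      nlinarith [pow_nonneg (by norm_num : (0:ℚ) ≤ 3/4) t]
    · have h1 : N / 2 = t := by omega
      have h2 : (N+1) / 2 = t+1 := by omega
      have h3 : (N+1+1) / 2 = t+1 := by omega
      rw [h1, h2] at ih
      rw [h2, h3, h1]
      have hp : ((3:ℚ)/4)^(t+1) = (3/4) * (3/4)^t := by ring
      nlinarith [pow_nonneg (by norm_num : (0:ℚ) ≤ 3/4) t]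

lemma geom_bound (N : ℕ) : (∑ r ∈ range N, ((3:ℚ)/4)^(r/2)) ≤ 8 := by
  have := geom_aux N
  have h1 : 0 ≤ ((3:ℚ)/4)^((N+1)/2) := by positivity
  have h2 : 0 ≤ ((3:ℚ)/4)^(N/2) := by positivity
  linarith

def Sk (m : ℕ) : Finset ℕ := {0, 1, 3, 4, m-5, m-4, m-2, m-1}

lemma Sk_subset (m : ℕ) (hm : 10 ≤ m) : Sk m ⊆ range m := by
  intro x hx
  simp only [Sk, mem_insert, mem_singleton] at hx
  simp only [mem_range]
  omega

lemma Sk_card (m : ℕ) (hm : 10 ≤ m) : (Sk m).card = 8 := by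
  rw [show Sk m = {0, 1, 3, 4, m-5, m-4, m-2, m-1} from rfl]
  rw [card_insert_of_notMem (by simp; omega), card_insert_of_notMem (by simp; omega),
      card_insert_of_notMem (by simp; omega), card_insert_of_notMem (by simp; omega),
      card_insert_of_notMem (by simp; omega), card_insert_of_notMem (by simp; omega),
      card_insert_of_notMem (by simp; omega), card_singleton]

lemma card_skel (m : ℕ) (hm : 10 ≤ m) :
    ((range m).powerset.filter (fun A => Sk m ⊆ A)).card = 2 ^ (m - 8) := by
  have hsub := Sk_subset m hm
  have : ((range m).powerset.filter (fun A => Sk m ⊆ A)).card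
      = ((range m \ Sk m).powerset).card := by
    apply Finset.card_bij' (fun A _ => A \ Sk m) (fun B _ => Sk m ∪ B)
    · intro A hA
      simp only [mem_filter, mem_powerset] at hA
      simp only [mem_powerset]
      exact sdiff_subset_sdiff hA.1 (le_refl _)
    · intro B hB
      simp only [mem_powerset] at hB
      simp only [mem_filter, mem_powerset]
      refine ⟨Finset.union_subset hsub (hB.trans sdiff_subset), subset_union_left⟩
    · intro A hA
      simp only [mem_filter, mem_powerset] at hA
      exact Finset.union_sdiff_of_subset hA.2
    · intro B hB
      simp only [mem_powerset] at hB
      rw [Finset.union_sdiff_left]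
      exact Finset.sdiff_eq_self_of_disjoint (Finset.disjoint_left.mpr (fun x hx => (Finset.mem_sdiff.mp (hB hx)).2))
  rw [this, Finset.card_powerset, Finset.card_sdiff_of_subset hsub, Finset.card_range, Sk_card m hm]

def Bad (m s : ℕ) : Finset (Finset ℕ) :=
  (range m).powerset.filter (fun A => Sk m ⊆ A ∧ s ∉ A + A)


lemma coverage (m : ℕ) (hm : 10 ≤ m) (A : Finset ℕ) (hA : A ⊆ range m) (hS : Sk m ⊆ A)
    (hU : ∀ s, 9 ≤ s → (s ≤ m - 6 ∨ (m + 4 ≤ s ∧ s ≤ 2*m - 11)) → s ∈ A + A) :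
    A + A = Icc 0 (2*m - 2) := by
  apply Finset.Subset.antisymm
  · intro x hx
    rw [Finset.mem_add] at hx
    obtain ⟨a, ha, b, hb, hab⟩ := hx
    have ha' := Finset.mem_range.mp (hA ha)
    have hb' := Finset.mem_range.mp (hA hb)
    simp only [Finset.mem_Icc]
    omega
  · intro x hx
    simp only [Finset.mem_Icc] at hx
    have h0 : (0:ℕ) ∈ A := hS (by simp [Sk])
    have h1 : (1:ℕ) ∈ A := hS (by simp [Sk])
    have h3 : (3:ℕ) ∈ A := hS (by simp [Sk])
    have h4 : (4:ℕ) ∈ A := hS (by simp [Sk])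
    have hm5 : m - 5 ∈ A := hS (by simp [Sk])
    have hm4 : m - 4 ∈ A := hS (by simp [Sk])
    have hm2 : m - 2 ∈ A := hS (by simp [Sk])
    have hm1 : m - 1 ∈ A := hS (by simp [Sk])
    have key : ∀ a b : ℕ, a ∈ A → b ∈ A → a + b = x → x ∈ A + A := by
      intro a b ha hb hab
      exact hab ▸ Finset.add_mem_add ha hb
    rcases Nat.lt_or_ge x 9 with h9 | h9
    · interval_cases x
      · exact key 0 0 h0 h0 rfl
      · exact key 0 1 h0 h1 rfl
      · exact key 1 1 h1 h1 rfl
      · exact key 0 3 h0 h3 rfl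
      · exact key 0 4 h0 h4 rfl
      · exact key 1 4 h1 h4 rfl
      · exact key 3 3 h3 h3 rfl
      · exact key 3 4 h3 h4 rfl
      · exact key 4 4 h4 h4 rfl
    · rcases le_or_gt x (m-6) with hx1 | hx1
      · exact hU x h9 (Or.inl hx1)
      · rcases le_or_gt x (m+3) with hx2 | hx2
        · have : x = m-5 ∨ x = m-4 ∨ x = m-3 ∨ x = m-2 ∨ x = m-1 ∨ x = m ∨ x = m+1 ∨ x = m+2 ∨ x = m+3 := by omega
          rcases this with h|h|h|h|h|h|h|h|h
          · exact key (m-5) 0 hm5 h0 (by omega)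
          · exact key (m-4) 0 hm4 h0 (by omega)
          · exact key (m-4) 1 hm4 h1 (by omega)
          · exact key (m-2) 0 hm2 h0 (by omega)
          · exact key (m-1) 0 hm1 h0 (by omega)
          · exact key (m-1) 1 hm1 h1 (by omega)
          · exact key (m-2) 3 hm2 h3 (by omega)
          · exact key (m-1) 3 hm1 h3 (by omega)
          · exact key (m-1) 4 hm1 h4 (by omega)
        · rcases le_or_gt x (2*m-11) with hx3 | hx3
          · exact hU x h9 (Or.inr ⟨by omega, hx3⟩)
          · have : x = 2*m-10 ∨ x = 2*m-9 ∨ x = 2*m-8 ∨ x = 2*m-7 ∨ x = 2*m-6 ∨ x = 2*m-5 ∨ x = 2*m-4 ∨ x = 2*m-3 ∨ x = 2*m-2 := by omega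
            rcases this with h|h|h|h|h|h|h|h|h
            · exact key (m-5) (m-5) hm5 hm5 (by omega)
            · exact key (m-5) (m-4) hm5 hm4 (by omega)
            · exact key (m-4) (m-4) hm4 hm4 (by omega)
            · exact key (m-5) (m-2) hm5 hm2 (by omega)
            · exact key (m-5) (m-1) hm5 hm1 (by omega)
            · exact key (m-4) (m-1) hm4 hm1 (by omega)
            · exact key (m-2) (m-2) hm2 hm2 (by omega)
            · exact key (m-2) (m-1) hm2 hm1 (by omega)
            · exact key (m-1) (m-1) hm1 hm1 (by omega)

lemma bad_bound (m s : ℕ) (hm : 10 ≤ m) (hs : 9 ≤ s) (hs2 : s ≤ m - 6) :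
    (Bad m s).card * 2 ^ (6 + 2 * ((s-9)/2)) ≤ 2 ^ (m-8) * 3 ^ ((s-9)/2 + 1) := by
  classical
  set F : Finset ℕ := range m \ Sk m with hF
  set Q : ℕ := (s+1)/2 with hQ
  have hQ5 : 5 ≤ Q := by omega
  set f : ℕ → Finset ℕ := fun j => ({j, s - j} : Finset ℕ) ∩ F with hf
  have hmemF : ∀ x, x ∈ F ↔ (x < m ∧ x ≠ 0 ∧ x ≠ 1 ∧ x ≠ 3 ∧ x ≠ 4 ∧ x ≠ m-5 ∧ x ≠ m-4 ∧ x ≠ m-2 ∧ x ≠ m-1) := by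
    intro x
    simp only [hF, Sk, mem_sdiff, mem_range, mem_insert, mem_singleton]
    tauto

  -- step 1 : injection
  have step1 : (Bad m s).card ≤ ((F.powerset.filter (fun B => ∀ j ∈ range Q, ¬ f j ⊆ B)).card) := by
    apply Finset.card_le_card_of_injOn (fun A => A \ Sk m)
    · intro A hA
      simp only [mem_coe, Bad, mem_filter, mem_powerset] at hA
      obtain ⟨hAr, hSA, hsA⟩ := hA
      simp only [mem_coe, mem_filter, mem_powerset]
      refine ⟨sdiff_subset_sdiff hAr (le_refl _), ?_⟩
      intro j hj hsubj
      apply hsA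
      have hjQ : j < Q := mem_range.mp hj
      have hmem : ∀ x, (x = j ∨ x = s - j) → x ∈ A := by
        intro x hx
        by_cases hxS : x ∈ Sk m
        · exact hSA hxS
        · have hxF : x ∈ F := by
            rw [hmemF]
            simp only [Sk, mem_insert, mem_singleton] at hxS
            push_neg at hxS
            constructor
            · omega
            · tauto
          have : x ∈ f j := by
            simp only [hf, mem_inter, mem_insert, mem_singleton]
            exact ⟨hx, hxF⟩
          exact (Finset.mem_sdiff.mp (hsubj this)).1
      have := Finset.add_mem_add (hmem j (Or.inl rfl)) (hmem (s-j) (Or.inr rfl))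
      rwa [show j + (s - j) = s by omega] at this
    · intro A hA B hB h
      simp only [Bad, coe_filter, Set.mem_setOf_eq, mem_powerset] at hA hB
      dsimp only at h
      have : Sk m ∪ (A \ Sk m) = Sk m ∪ (B \ Sk m) := by rw [h]
      rwa [Finset.union_sdiff_of_subset hA.2.1, Finset.union_sdiff_of_subset hB.2.1] at this
  -- step 2 : apply count_avoid
  have step2 := count_avoid f (range Q) F
    (fun j _ => inter_subset_right)
    (by
      intro i hi j hj hij
      rw [Finset.disjoint_left]
      intro x hxi hxj
      simp only [hf, mem_inter, mem_insert, mem_singleton] at hxi hxj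
      have hi' : i < Q := mem_range.mp hi
      have hj' : j < Q := mem_range.mp hj
      omega)
  -- step 3 : compute the sum and product
  have hsplit : range Q = Ico 0 5 ∪ Ico 5 Q := by
    rw [Finset.range_eq_Ico, ← Finset.Ico_union_Ico_eq_Ico (by omega : (0:ℕ) ≤ 5) hQ5]
  have hdico : Disjoint (Ico 0 5) (Ico 5 Q) := by
    rw [Finset.disjoint_left]; intro x hx hx'
    simp only [mem_Ico] at hx hx'; omega
  have hf0 : f 0 = {s} := by
    ext x
    simp only [hf, mem_inter, mem_insert, mem_singleton, hmemF]
    omega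
  have hf1 : f 1 = {s-1} := by
    ext x
    simp only [hf, mem_inter, mem_insert, mem_singleton, hmemF]
    omega
  have hf2 : f 2 = {2, s-2} := by
    ext x
    simp only [hf, mem_inter, mem_insert, mem_singleton, hmemF]
    omega
  have hf3 : f 3 = {s-3} := by
    ext x
    simp only [hf, mem_inter, mem_insert, mem_singleton, hmemF]
    omega
  have hf4 : f 4 = {s-4} := by
    ext x
    simp only [hf, mem_inter, mem_insert, mem_singleton, hmemF]
    omega
  have hcard0 : (f 0).card = 1 := by rw [hf0]; simp
  have hcard1 : (f 1).card = 1 := by rw [hf1]; simp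
  have hcard2 : (f 2).card = 2 := by rw [hf2]; exact Finset.card_pair (by omega)
  have hcard3 : (f 3).card = 1 := by rw [hf3]; simp
  have hcard4 : (f 4).card = 1 := by rw [hf4]; simp
  have hcardj : ∀ j ∈ Ico 5 Q, (f j).card = 2 := by
    intro j hj
    simp only [mem_Ico] at hj
    have : f j = {j, s - j} := by
      ext x
      simp only [hf, mem_inter, mem_insert, mem_singleton, hmemF]
      omega
    rw [this]
    exact Finset.card_pair (by omega)
  have hsum : ∑ j ∈ range Q, (f j).card = 6 + 2 * (Q - 5) := by
    rw [hsplit, Finset.sum_union hdico]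
    have h1 : ∑ j ∈ Ico 0 5, (f j).card = 6 := by
      rw [show Ico 0 5 = range 5 by rw [Finset.range_eq_Ico]]
      rw [Finset.sum_range_succ, Finset.sum_range_succ, Finset.sum_range_succ,
          Finset.sum_range_succ, Finset.sum_range_one]
      rw [hcard0, hcard1, hcard2, hcard3, hcard4]
    have h2 : ∑ j ∈ Ico 5 Q, (f j).card = 2 * (Q - 5) := by
      rw [Finset.sum_congr rfl hcardj, Finset.sum_const, Nat.card_Ico, smul_eq_mul]
      ring
    rw [h1, h2]
  have hprod : ∏ j ∈ range Q, (2 ^ (f j).card - 1) = 3 ^ (Q - 5 + 1) := by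
    rw [hsplit, Finset.prod_union hdico]
    have h1 : ∏ j ∈ Ico 0 5, (2 ^ (f j).card - 1) = 3 := by
      rw [show Ico 0 5 = range 5 by rw [Finset.range_eq_Ico]]
      rw [Finset.prod_range_succ, Finset.prod_range_succ, Finset.prod_range_succ,
          Finset.prod_range_succ, Finset.prod_range_one]
      rw [hcard0, hcard1, hcard2, hcard3, hcard4]
      norm_num
    have h2 : ∏ j ∈ Ico 5 Q, (2 ^ (f j).card - 1) = 3 ^ (Q - 5) := by
      rw [Finset.prod_congr rfl (fun j hj => by rw [hcardj j hj])]
      rw [Finset.prod_const, Nat.card_Ico]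
      norm_num
    rw [h1, h2, pow_succ, mul_comm]
  have hFcard : F.card = m - 8 := by
    rw [hF, Finset.card_sdiff_of_subset (Sk_subset m hm), Finset.card_range, Sk_card m hm]
  rw [hsum, hprod, hFcard] at step2
  have hQ59 : Q - 5 = (s - 9)/2 := by omega
  rw [hQ59] at step2
  calc (Bad m s).card * 2 ^ (6 + 2 * ((s-9)/2))
      ≤ ((F.powerset.filter (fun B => ∀ j ∈ range Q, ¬ f j ⊆ B)).card) * 2 ^ (6 + 2 * ((s-9)/2)) :=
        Nat.mul_le_mul_right _ step1
    _ ≤ 2 ^ (m-8) * 3 ^ ((s-9)/2 + 1) := by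
        exact step2

lemma refl_subset (m : ℕ) (A : Finset ℕ) (hA : A ⊆ range m) :
    A.image (fun x => m-1-x) ⊆ range m := by
  intro x hx
  simp only [mem_image] at hx
  obtain ⟨a, ha, rfl⟩ := hx
  have := mem_range.mp (hA ha)
  simp only [mem_range]
  omega

lemma refl_invol (m : ℕ) (A : Finset ℕ) (hA : A ⊆ range m) :
    (A.image (fun x => m-1-x)).image (fun x => m-1-x) = A := by
  rw [Finset.image_image]
  have : ∀ a ∈ A, ((fun x => m-1-x) ∘ (fun x => m-1-x)) a = id a := by
    intro a ha
    have := mem_range.mp (hA ha)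
    simp only [Function.comp_apply, id_eq]
    omega
  rw [Finset.image_congr this, Finset.image_id]

lemma refl_Sk (m : ℕ) (hm : 10 ≤ m) (A : Finset ℕ) (hS : Sk m ⊆ A) :
    Sk m ⊆ A.image (fun x => m-1-x) := by
  intro x hx
  simp only [Sk, mem_insert, mem_singleton] at hx
  simp only [mem_image]
  rcases hx with h|h|h|h|h|h|h|h
  · exact ⟨m-1, hS (by simp [Sk]), by omega⟩
  · exact ⟨m-2, hS (by simp [Sk]), by omega⟩
  · exact ⟨m-4, hS (by simp [Sk]), by omega⟩
  · exact ⟨m-5, hS (by simp [Sk]), by omega⟩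
  · exact ⟨4, hS (by simp [Sk]), by omega⟩
  · exact ⟨3, hS (by simp [Sk]), by omega⟩
  · exact ⟨1, hS (by simp [Sk]), by omega⟩
  · exact ⟨0, hS (by simp [Sk]), by omega⟩

lemma refl_sum (m : ℕ) (A : Finset ℕ) (hA : A ⊆ range m) (u : ℕ) (hu : u ∈ A + A) :
    2*m-2-u ∈ A.image (fun x => m-1-x) + A.image (fun x => m-1-x) := by
  rw [Finset.mem_add] at hu ⊢
  obtain ⟨a, ha, b, hb, rfl⟩ := hu
  have ha' := mem_range.mp (hA ha)
  have hb' := mem_range.mp (hA hb)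
  refine ⟨m-1-a, Finset.mem_image_of_mem _ ha, m-1-b, Finset.mem_image_of_mem _ hb, by omega⟩

lemma bad_reflect (m s : ℕ) (hm : 10 ≤ m) (hs : 9 ≤ s) (hs2 : s ≤ m - 6) :
    (Bad m (2*m-2-s)).card = (Bad m s).card := by
  have hto : ∀ A ∈ Bad m s, A.image (fun x => m-1-x) ∈ Bad m (2*m-2-s) := by
    intro A hA
    simp only [Bad, mem_filter, mem_powerset] at hA ⊢
    obtain ⟨hAr, hSA, hsA⟩ := hA
    refine ⟨refl_subset m A hAr, refl_Sk m hm A hSA, ?_⟩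
    intro hmem
    apply hsA
    have := refl_sum m _ (refl_subset m A hAr) _ hmem
    rw [refl_invol m A hAr] at this
    rwa [show 2*m-2-(2*m-2-s) = s by omega] at this
  have hfrom : ∀ A ∈ Bad m (2*m-2-s), A.image (fun x => m-1-x) ∈ Bad m s := by
    intro A hA
    simp only [Bad, mem_filter, mem_powerset] at hA ⊢
    obtain ⟨hAr, hSA, hsA⟩ := hA
    refine ⟨refl_subset m A hAr, refl_Sk m hm A hSA, ?_⟩
    intro hmem
    apply hsA
    have := refl_sum m _ (refl_subset m A hAr) _ hmem
    rw [refl_invol m A hAr] at this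
    exact this
  have hinv1 : ∀ A ∈ Bad m (2*m-2-s), (A.image (fun x => m-1-x)).image (fun x => m-1-x) = A := by
    intro A hA
    simp only [Bad, mem_filter, mem_powerset] at hA
    exact refl_invol m A hA.1
  have hinv2 : ∀ A ∈ Bad m s, (A.image (fun x => m-1-x)).image (fun x => m-1-x) = A := by
    intro A hA
    simp only [Bad, mem_filter, mem_powerset] at hA
    exact refl_invol m A hA.1
  exact Finset.card_bij' (fun A hA => A.image (fun x => m-1-x)) (fun A hA => A.image (fun x => m-1-x))
    (fun A hA => hfrom A hA) (fun A hA => hto A hA) (fun A hA => hinv1 A hA) (fun A hA => hinv2 A hA)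

lemma bad_bound_q (m s : ℕ) (hm : 10 ≤ m) (hs : 9 ≤ s) (hs2 : s ≤ m - 6) :
    ((Bad m s).card : ℚ) ≤ 2^(m-8) * (3/64) * (3/4)^((s-9)/2) := by
  set p := (s-9)/2 with hp
  have hb := bad_bound m s hm hs hs2
  have hbq : ((Bad m s).card : ℚ) * 2^(6+2*p) ≤ 2^(m-8) * 3^(p+1) := by
    exact_mod_cast hb
  have E : (2^(m-8) * (3/64) * ((3:ℚ)/4)^p) * 2^(6+2*p) = 2^(m-8) * 3^(p+1) := by
    have h1 : ((3:ℚ)/4)^p * 4^p = 3^p := by rw [← mul_pow]; norm_num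
    have h2 : ((2:ℚ))^(6+2*p) = 64 * 4^p := by rw [pow_add, pow_mul]; norm_num
    calc (2^(m-8) * (3/64) * ((3:ℚ)/4)^p) * 2^(6+2*p)
        = 2^(m-8) * 3 * (((3:ℚ)/4)^p * 4^p) := by rw [h2]; ring
      _ = 2^(m-8) * 3 * 3^p := by rw [h1]
      _ = 2^(m-8) * 3^(p+1) := by rw [pow_succ]; ring
  rw [← E] at hbq
  exact le_of_mul_le_mul_right hbq (by positivity)

lemma low_sum (m : ℕ) (hm : 10 ≤ m) :
    ∑ s ∈ Icc 9 (m-6), ((3:ℚ)/4)^((s-9)/2) ≤ 8 := by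
  have h1 : Icc 9 (m-6) = Ico 9 (m-5) := by
    rw [← Finset.Ico_add_one_right_eq_Icc]
    congr 1
    omega
  rw [h1, Finset.sum_Ico_eq_sum_range]
  have h2 : ∀ r ∈ range (m-5-9), ((3:ℚ)/4)^((9+r-9)/2) = ((3:ℚ)/4)^(r/2) := by
    intro r _
    congr 1
    omega
  rw [Finset.sum_congr rfl h2]
  exact geom_bound _

theorem main_m (m : ℕ) (hm : 10 ≤ m) :
    2^(m-10) ≤ ((range m).powerset.filter (fun A => A + A = Icc 0 (2*m-2))).card := by
  classical
  set 𝒮 := (range m).powerset.filter (fun A => Sk m ⊆ A) with h𝒮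
  set U : Finset ℕ := Icc 9 (m-6) ∪ Icc (m+4) (2*m-11) with hU
  set B := U.biUnion (fun s => Bad m s) with hB
  set Good := (range m).powerset.filter (fun A => A + A = Icc 0 (2*m-2)) with hGood
  have hsub : 𝒮 \ B ⊆ Good := by
    intro A hA
    rw [mem_sdiff] at hA
    obtain ⟨hA𝒮, hAB⟩ := hA
    rw [h𝒮, mem_filter, mem_powerset] at hA𝒮
    rw [hGood, mem_filter, mem_powerset]
    refine ⟨hA𝒮.1, ?_⟩
    apply coverage m hm A hA𝒮.1 hA𝒮.2
    intro s hs9 hscase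
    by_contra hns
    apply hAB
    rw [hB, Finset.mem_biUnion]
    refine ⟨s, ?_, ?_⟩
    · rw [hU, mem_union]
      rcases hscase with h | h
      · exact Or.inl (mem_Icc.mpr ⟨hs9, h⟩)
      · exact Or.inr (mem_Icc.mpr ⟨h.1, h.2⟩)
    · rw [Bad, mem_filter, mem_powerset]
      exact ⟨hA𝒮.1, hA𝒮.2, hns⟩
  -- counting
  have hdisjU : Disjoint (Icc 9 (m-6)) (Icc (m+4) (2*m-11)) := by
    rw [Finset.disjoint_left]
    intro x hx hx'
    rw [mem_Icc] at hx hx'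
    omega
  have hBsum : (B.card : ℚ) ≤ ∑ s ∈ Icc 9 (m-6), ((Bad m s).card : ℚ)
      + ∑ s ∈ Icc (m+4) (2*m-11), ((Bad m s).card : ℚ) := by
    have h1 : B.card ≤ ∑ s ∈ U, (Bad m s).card := Finset.card_biUnion_le
    have h2 : ∑ s ∈ U, (Bad m s).card
        = ∑ s ∈ Icc 9 (m-6), (Bad m s).card + ∑ s ∈ Icc (m+4) (2*m-11), (Bad m s).card := by
      rw [hU, Finset.sum_union hdisjU]
    rw [h2] at h1
    exact_mod_cast h1
  have hupper : ∑ s ∈ Icc (m+4) (2*m-11), ((Bad m s).card : ℚ)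
      = ∑ s ∈ Icc 9 (m-6), ((Bad m s).card : ℚ) := by
    refine Finset.sum_nbij' (fun s => 2*m-2-s) (fun s => 2*m-2-s) ?_ ?_ ?_ ?_ ?_
    · intro a ha; simp only [mem_Icc] at ha ⊢; omega
    · intro a ha; simp only [mem_Icc] at ha ⊢; omega
    · intro a ha; simp only [mem_Icc] at ha; omega
    · intro a ha; simp only [mem_Icc] at ha; omega
    · intro a ha
      rw [mem_Icc] at ha
      have h9 : 9 ≤ 2*m-2-a := by omega
      have h6 : 2*m-2-a ≤ m-6 := by omega
      have h := bad_reflect m (2*m-2-a) hm h9 h6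
      rw [show 2*m-2-(2*m-2-a) = a by omega] at h
      rw [h]
  have hlowsum : ∑ s ∈ Icc 9 (m-6), ((Bad m s).card : ℚ) ≤ 2^(m-8) * (3/8) := by
    calc ∑ s ∈ Icc 9 (m-6), ((Bad m s).card : ℚ)
        ≤ ∑ s ∈ Icc 9 (m-6), 2^(m-8) * (3/64) * ((3:ℚ)/4)^((s-9)/2) := by
          apply Finset.sum_le_sum
          intro s hsi
          rw [mem_Icc] at hsi
          exact bad_bound_q m s hm hsi.1 hsi.2
      _ = 2^(m-8) * (3/64) * ∑ s ∈ Icc 9 (m-6), ((3:ℚ)/4)^((s-9)/2) := by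
          rw [Finset.mul_sum]
      _ ≤ 2^(m-8) * (3/64) * 8 := by
          apply mul_le_mul_of_nonneg_left (low_sum m hm) (by positivity)
      _ = 2^(m-8) * (3/8) := by ring
  have hcard𝒮 : (𝒮.card : ℚ) = 2^(m-8) := by
    rw [h𝒮, card_skel m hm]; push_cast; ring
  have hchain : (𝒮.card : ℚ) ≤ (Good.card : ℚ) + (B.card : ℚ) := by
    have h1 : 𝒮 ⊆ (𝒮 \ B) ∪ B := by
      intro x hx
      rw [mem_union, mem_sdiff]
      by_cases h : x ∈ B
      · exact Or.inr h
      · exact Or.inl ⟨hx, h⟩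
    have h2 : 𝒮.card ≤ (𝒮 \ B).card + B.card :=
      le_trans (Finset.card_le_card h1) (Finset.card_union_le _ _)
    have h3 : (𝒮 \ B).card ≤ Good.card := Finset.card_le_card hsub
    have := le_trans h2 (Nat.add_le_add_right h3 _)
    exact_mod_cast this
  have hfinal : ((2:ℚ))^(m-10) ≤ (Good.card : ℚ) := by
    have hBle : (B.card : ℚ) ≤ 2^(m-8) * (3/4) := by
      rw [hupper] at hBsum
      calc (B.card : ℚ) ≤ _ := hBsum
        _ = 2 * ∑ s ∈ Icc 9 (m-6), ((Bad m s).card : ℚ) := by ring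
        _ ≤ 2 * (2^(m-8) * (3/8)) := by linarith [hlowsum]
        _ = 2^(m-8) * (3/4) := by ring
    have hpow : ((2:ℚ))^(m-8) = 4 * 2^(m-10) := by
      rw [show m-8 = (m-10)+2 by omega, pow_add]
      ring
    have := hchain
    rw [hcard𝒮, hpow] at this
    rw [hpow] at hBle
    linarith
  have : ((2^(m-10) : ℕ) : ℚ) ≤ (Good.card : ℚ) := by push_cast; exact hfinal
  exact_mod_cast this

lemma shift_sumset (A : Finset ℕ) (c : ℕ) :
    A.image (fun x => x + c) + A.image (fun x => x + c) = (A + A).image (fun x => x + 2*c) := by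
  ext x
  simp only [Finset.mem_add, Finset.mem_image]
  constructor
  · rintro ⟨y, ⟨a, ha, rfl⟩, z, ⟨b, hb, rfl⟩, rfl⟩
    exact ⟨a + b, ⟨a, ha, b, hb, rfl⟩, by ring⟩
  · rintro ⟨w, ⟨a, ha, b, hb, rfl⟩, rfl⟩
    exact ⟨a + c, ⟨a, ha, rfl⟩, b + c, ⟨b, hb, rfl⟩, by ring⟩

lemma Icc_self_add (a b : ℕ) (hab : a ≤ b) :
    Icc a b + Icc a b = Icc (2*a) (2*b) := by
  ext x
  simp only [Finset.mem_add, Finset.mem_Icc]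
  constructor
  · rintro ⟨y, hy, z, hz, rfl⟩
    omega
  · rintro ⟨h1, h2⟩
    rcases le_or_gt x (a + b) with h | h
    · exact ⟨a, ⟨le_refl a, hab⟩, x - a, ⟨by omega, by omega⟩, by omega⟩
    · exact ⟨x - b, ⟨by omega, by omega⟩, b, ⟨hab, le_refl b⟩, by omega⟩


end CountMissingAux

open scoped Pointwise

open Finset in
/-- For every even positive integer `k` and `n > k`, the number of subsets
`A ⊆ {0,...,n-1}` with `A + A = [k, 2n-2]` (the sumset misses exactly the first `k`
elements of `[0, 2n-2]`) is at least `2^(n - k/2 - 10)`. Consequently, for a uniformly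
random `A ⊆ {0,...,n-1}` the probability that `|[0,2n-2] \ (A+A)| = k` is at least
`2^(-k/2 - 10)`. -/
theorem count_missing_exactly_k (k n : ℕ) (hk : Even k) (h0 : 0 < k) (hn : k < n) :
    (2 ^ (n - k / 2 - 10) ≤
      ((Finset.range n).powerset.filter
        (fun A : Finset ℕ => A + A = Finset.Icc k (2 * n - 2))).card) ∧
    (((1 : ℚ) / 2) ^ (k / 2 + 10) ≤
      (((Finset.range n).powerset.filter
        (fun A : Finset ℕ => (Finset.Icc 0 (2 * n - 2) \ (A + A)).card = k)).card : ℚ) /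
        2 ^ n) := by
  obtain ⟨r, hr⟩ := hk
  set c := k / 2 with hc
  have hkc : k = 2 * c := by omega
  set m := n - c with hm
  have hnm : n = m + c := by omega
  have hm2 : 2 ≤ m := by omega
  set G1 := (Finset.range n).powerset.filter
      (fun A : Finset ℕ => A + A = Finset.Icc k (2 * n - 2)) with hG1
  -- part 1
  have part1 : 2 ^ (m - 10) ≤ G1.card := by
    rcases le_or_gt 10 m with hm10 | hm10
    · -- big case : use main_m and shift
      have hmain := main_m m hm10
      apply le_trans hmain
      apply Finset.card_le_card_of_injOn (fun A => A.image (fun x => x + c))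
      · intro A hA
        simp only [mem_coe, mem_filter, mem_powerset] at hA
        obtain ⟨hAr, hAsum⟩ := hA
        simp only [mem_coe, hG1, mem_filter, mem_powerset]
        constructor
        · intro x hx
          simp only [mem_image] at hx
          obtain ⟨a, ha, rfl⟩ := hx
          have := mem_range.mp (hAr ha)
          simp only [mem_range]; omega
        · rw [shift_sumset, hAsum, Finset.image_add_right_Icc]
          congr 1 <;> omega
      · intro A hA B hB h
        dsimp only at h
        have : ∀ (C D : Finset ℕ), C.image (fun x => x + c) = D.image (fun x => x + c) → C ⊆ D := by
          intro C D hCD y hy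
          have : y + c ∈ D.image (fun x => x + c) := by
            rw [← hCD]; exact Finset.mem_image_of_mem _ hy
          simp only [mem_image] at this
          obtain ⟨z, hz, hzc⟩ := this
          have : z = y := by omega
          exact this ▸ hz
        exact Finset.Subset.antisymm (this A B h) (this B A h.symm)
    · -- small case : single witness
      have : (Icc c (n-1)) ∈ G1 := by
        simp only [hG1, mem_filter, mem_powerset]
        constructor
        · intro x hx
          rw [mem_Icc] at hx
          rw [mem_range]; omega
        · rw [Icc_self_add c (n-1) (by omega)]
          congr 1 <;> omega
      have h1 : 1 ≤ G1.card := Finset.card_pos.mpr ⟨_, this⟩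
      have : m - 10 = 0 := by omega
      rw [this]; simpa using h1
  refine ⟨by exact_mod_cast part1, ?_⟩
  -- part 2
  set G2 := (Finset.range n).powerset.filter
      (fun A : Finset ℕ => (Finset.Icc 0 (2 * n - 2) \ (A + A)).card = k) with hG2
  have hsub : G1 ⊆ G2 := by
    intro A hA
    simp only [hG1, mem_filter, mem_powerset] at hA
    simp only [hG2, mem_filter, mem_powerset]
    refine ⟨hA.1, ?_⟩
    rw [hA.2]
    have : Finset.Icc 0 (2*n-2) \ Finset.Icc k (2*n-2) = Finset.Ico 0 k := by
      ext x
      simp only [mem_sdiff, mem_Icc, mem_Ico]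
      omega
    rw [this, Nat.card_Ico]
    omega
  have hG2card : 2 ^ (m - 10) ≤ G2.card := le_trans part1 (Finset.card_le_card hsub)
  have hpos : (0:ℚ) < 2 ^ n := by positivity
  rw [le_div_iff₀ hpos]
  have hcast : ((2:ℚ)) ^ (m - 10) ≤ (G2.card : ℚ) := by exact_mod_cast hG2card
  apply le_trans _ hcast
  have : ((1:ℚ)/2) ^ (c + 10) * 2 ^ n = 2^n / 2^(c+10) := by
    rw [div_pow, one_pow, div_mul_eq_mul_div, one_mul]
  rw [this, div_le_iff₀ (by positivity), ← pow_add]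
  apply pow_le_pow_right₀ (by norm_num)
  omega
end

section
/- Let D ⊆ ℕ be random with 0 ∈ D and each positive integer in D independently with probability 1/2, conditioned on D ∩ [0, n) = β where 0 ∈ β ⊆ [0, n). Then the conditional expectation of the number of integers t ≥ 2n missing from D + D equals 5 · 2^{−|β|}. -/
open MeasureTheory ProbabilityTheory
open scoped Pointwise ProbabilityTheory Classical

section Helpers

variable {Ω : Type*} [MeasurableSpace Ω] {μ : Measure Ω} [IsProbabilityMeasure μ]
  {X : ℕ → Ω → Bool}

/-- Two-block independence for events measurable wrt groups of coordinates. -/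
lemma blocks_indep (hmeas : ∀ i, Measurable (X i))
    (hindep : iIndepFun X μ)
    {S T : Set ℕ} (hST : Disjoint S T) {A B : Set Ω}
    (hA : MeasurableSet[⨆ i ∈ S, MeasurableSpace.comap (X i) inferInstance] A)
    (hB : MeasurableSet[⨆ i ∈ T, MeasurableSpace.comap (X i) inferInstance] B) :
    μ (A ∩ B) = μ A * μ B := by
  have h := (iIndepFun_iff_iIndep _ _ _).1 hindep
  have h2 := indep_iSup_of_disjoint (fun i => (hmeas i).comap_le) h hST
  exact ((Indep_iff _ _ _).1 h2) A B hA hB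

omit [IsProbabilityMeasure μ] in
lemma meas_mem_sup {S : Set ℕ} {j : ℕ} (hj : j ∈ S) (s : Set Bool) :
    MeasurableSet[⨆ i ∈ S, MeasurableSpace.comap (X i) inferInstance] (X j ⁻¹' s) := by
  have : MeasurableSpace.comap (X j) inferInstance ≤
      ⨆ i ∈ S, MeasurableSpace.comap (X i) inferInstance := le_biSup (fun i => MeasurableSpace.comap (X i) inferInstance) hj
  exact this _ ⟨s, trivial, rfl⟩

lemma enn_div_ne_top {a b : ℕ} (hb : b ≠ 0) : ((a:ENNReal)/b) ≠ ⊤ :=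
  (ENNReal.div_lt_top (by simp) (by simp [hb])).ne

lemma enn_half_mul_half : (1:ENNReal)/2 * (1/2) = 1/4 := by
  rw [← ENNReal.toReal_eq_toReal_iff' (ENNReal.mul_ne_top (by simp) (by simp)) (by simp)]
  rw [ENNReal.toReal_mul]; simp [ENNReal.toReal_div]; norm_num

lemma enn_one_sub_quarter : (1 : ENNReal) - 1/4 = 3/4 := by
  have h34 : ((3:ENNReal)/4) ≠ ⊤ := by exact_mod_cast enn_div_ne_top (by norm_num)
  refine ENNReal.sub_eq_of_eq_add (by simp) ?_
  rw [← ENNReal.toReal_eq_toReal_iff' (by simp) (ENNReal.add_ne_top.2 ⟨h34, by simp⟩)]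
  rw [ENNReal.toReal_add h34 (by simp)]; simp [ENNReal.toReal_div]; norm_num

lemma enn_one_sub_half : (1 : ENNReal) - 1/2 = 1/2 := by
  refine ENNReal.sub_eq_of_eq_add (by simp) ?_
  rw [← ENNReal.toReal_eq_toReal_iff' (by simp) (ENNReal.add_ne_top.2 ⟨by simp, by simp⟩)]
  rw [ENNReal.toReal_add (by simp) (by simp)]; simp [ENNReal.toReal_div]; norm_num

lemma pair_meas (hmeas : ∀ i, Measurable (X i))
    (hindep : iIndepFun X μ)
    (hhalf : ∀ i, 0 < i → μ {ω | X i ω = true} = 1 / 2)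
    {j t' : ℕ} (hj : 0 < j) (h2j : 2 * j ≤ t') :
    μ {ω | ¬(X j ω = true ∧ X (t' - j) ω = true)} =
      if 2 * j < t' then 3/4 else 1/2 := by
  have hXj : μ (X j ⁻¹' {true}) = 1/2 := hhalf j hj
  rcases eq_or_lt_of_le h2j with heq | hlt
  · have hjj : t' - j = j := by omega
    rw [if_neg (by omega)]
    have hs : {ω | ¬(X j ω = true ∧ X (t' - j) ω = true)} = (X j ⁻¹' {true})ᶜ := by
      ext ω; simp [hjj]
    rw [hs, prob_compl_eq_one_sub ((hmeas j) (measurableSet_singleton true)), hXj,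
      enn_one_sub_half]
  · rw [if_pos hlt]
    have hne : j ≠ t' - j := by omega
    have hF : IndepFun (X j) (X (t' - j)) μ := hindep.indepFun hne
    have hX2 : μ (X (t' - j) ⁻¹' {true}) = 1/2 := hhalf (t' - j) (by omega)
    have hset : {ω | ¬(X j ω = true ∧ X (t' - j) ω = true)} =
        (X j ⁻¹' {true} ∩ X (t' - j) ⁻¹' {true})ᶜ := by
      ext ω; simp
    rw [hset, prob_compl_eq_one_sub
        (((hmeas j) (measurableSet_singleton true)).inter
          ((hmeas (t' - j)) (measurableSet_singleton true))),
      hF.meas_inter ⟨{true}, trivial, rfl⟩ ⟨{true}, trivial, rfl⟩, hXj, hX2,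
      enn_half_mul_half, enn_one_sub_quarter]

lemma pairs_meas (hmeas : ∀ i, Measurable (X i))
    (hindep : iIndepFun X μ)
    (hhalf : ∀ i, 0 < i → μ {ω | X i ω = true} = 1 / 2)
    {n : ℕ} (hn : 1 ≤ n) (t' : ℕ) :
    ∀ m, 2 * m ≤ t' →
      μ (⋂ j ∈ Finset.Icc n m, {ω | ¬(X j ω = true ∧ X (t' - j) ω = true)}) =
        ∏ j ∈ Finset.Icc n m, (if 2 * j < t' then (3 : ENNReal)/4 else 1/2) := by
  intro m
  induction m with
  | zero =>
    intro _
    have : Finset.Icc n 0 = ∅ := by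
      rw [Finset.Icc_eq_empty_iff]; omega
    simp [this]
  | succ m ih =>
    intro hm
    by_cases hnm : n ≤ m + 1
    · have hicc : Finset.Icc n (m + 1) = insert (m + 1) (Finset.Icc n m) := by
        ext x; simp [Finset.mem_Icc]; omega
      have hnotmem : m + 1 ∉ Finset.Icc n m := by simp
      rw [hicc, Finset.prod_insert hnotmem]
      rw [show (⋂ j ∈ insert (m + 1) (Finset.Icc n m),
            {ω | ¬(X j ω = true ∧ X (t' - j) ω = true)}) =
          {ω | ¬(X (m+1) ω = true ∧ X (t' - (m+1)) ω = true)} ∩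
            ⋂ j ∈ Finset.Icc n m, {ω | ¬(X j ω = true ∧ X (t' - j) ω = true)} by
        simp [Set.biInter_insert]]
      have hdisj : Disjoint ({m + 1, t' - (m + 1)} : Set ℕ)
          (⋃ j ∈ Set.Icc n m, ({j, t' - j} : Set ℕ)) := by
        rw [Set.disjoint_left]
        rintro a ha hb
        simp only [Set.mem_iUnion, Set.mem_Icc, Set.mem_insert_iff,
          Set.mem_singleton_iff, exists_prop] at ha hb
        obtain ⟨j, ⟨hj1, hj2⟩, hj3⟩ := hb
        rcases ha with rfl | rfl <;> rcases hj3 with h | h <;> omega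
      have hA : MeasurableSet[⨆ i ∈ ({m + 1, t' - (m + 1)} : Set ℕ),
          MeasurableSpace.comap (X i) inferInstance]
          {ω | ¬(X (m+1) ω = true ∧ X (t' - (m+1)) ω = true)} := by
        have : {ω | ¬(X (m+1) ω = true ∧ X (t' - (m+1)) ω = true)} =
            (X (m+1) ⁻¹' {true} ∩ X (t' - (m+1)) ⁻¹' {true})ᶜ := by ext ω; simp
        rw [this]
        exact ((meas_mem_sup (by simp) _).inter
          (meas_mem_sup (by simp) _)).compl
      have hB : MeasurableSet[⨆ i ∈ (⋃ j ∈ Set.Icc n m, ({j, t' - j} : Set ℕ)),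
          MeasurableSpace.comap (X i) inferInstance]
          (⋂ j ∈ Finset.Icc n m, {ω | ¬(X j ω = true ∧ X (t' - j) ω = true)}) := by
        refine Finset.measurableSet_biInter _ (fun j hj => ?_)
        rw [Finset.mem_Icc] at hj
        have hjmem : j ∈ ⋃ j ∈ Set.Icc n m, ({j, t' - j} : Set ℕ) := by
          simp only [Set.mem_iUnion, Set.mem_Icc, exists_prop]
          exact ⟨j, by simpa using hj, by simp⟩
        have hj2mem : t' - j ∈ ⋃ j ∈ Set.Icc n m, ({j, t' - j} : Set ℕ) := by
          simp only [Set.mem_iUnion, Set.mem_Icc, exists_prop]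
          exact ⟨j, by simpa using hj, by simp⟩
        have : {ω | ¬(X j ω = true ∧ X (t' - j) ω = true)} =
            (X j ⁻¹' {true} ∩ X (t' - j) ⁻¹' {true})ᶜ := by ext ω; simp
        rw [this]
        exact ((meas_mem_sup hjmem _).inter (meas_mem_sup hj2mem _)).compl
      rw [blocks_indep hmeas hindep hdisj hA hB,
        pair_meas hmeas hindep hhalf (by omega) hm, ih (by omega)]
    · have h1 : Finset.Icc n (m + 1) = ∅ := by
        rw [Finset.Icc_eq_empty_iff]; omega
      simp [h1]

lemma prod_value (n t : ℕ) :
    (∏ j ∈ Finset.Icc n ((2*n+t)/2), (if 2*j < 2*n+t then (3:ENNReal)/4 else 1/2))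
    = if Even t then (1/2) * (3/4)^(t/2) else (3/4)^((t+1)/2) := by
  have h1 : (2*n+t)/2 = n + t/2 := by omega
  rw [h1, show Finset.Icc n (n + t/2) = Finset.Ico n (n + t/2 + 1) by
    ext x; simp [Finset.mem_Icc, Finset.mem_Ico] <;> omega,
    Finset.prod_Ico_eq_prod_range]
  have h2 : n + t/2 + 1 - n = t/2 + 1 := by omega
  rw [h2, Finset.prod_range_succ]
  have h3 : ∀ i ∈ Finset.range (t/2),
      (if 2*(n+i) < 2*n+t then (3:ENNReal)/4 else 1/2) = 3/4 := by
    intro i hi; rw [Finset.mem_range] at hi; rw [if_pos (by omega)]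
  rw [Finset.prod_congr rfl h3, Finset.prod_const, Finset.card_range]
  by_cases ht : Even t
  · have h4 : t % 2 = 0 := Nat.even_iff.mp ht
    have h5 : ¬ (2*(n + t/2) < 2*n+t) := by omega
    rw [if_neg h5, if_pos ht, mul_comm]
  · have h4 : t % 2 = 1 := Nat.odd_iff.mp (Nat.not_even_iff_odd.mp ht)
    have h5 : 2*(n + t/2) < 2*n+t := by omega
    rw [if_pos h5, if_neg ht, show (t+1)/2 = t/2 + 1 by omega, pow_succ]

end Helpers

/-- Let `D` be a random subset of `ℕ` containing `0`, with each positive integer in `D`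
independently with probability `1/2` (encoded by independent indicator variables `X i`).
Conditioned on `D ∩ [0, n) = β` (with `0 ∈ β ⊆ [0, n)`), the expected number of
integers `t ≥ 2n` missing from `D + D` equals `5 · 2^(-|β|)`. -/
theorem cond_expect_missing_tail {Ω : Type*} [MeasurableSpace Ω] (μ : Measure Ω)
    [IsProbabilityMeasure μ] (X : ℕ → Ω → Bool) (hmeas : ∀ i, Measurable (X i))
    (hindep : iIndepFun X μ)
    (hzero : ∀ ω, X 0 ω = true)
    (hhalf : ∀ i, 0 < i → μ {ω | X i ω = true} = 1 / 2)
    (n : ℕ) (hn : 1 ≤ n) (β : Finset ℕ) (hβ0 : 0 ∈ β) (hβn : ∀ b ∈ β, b < n) :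
    ∫⁻ ω, (∑' t : ℕ,
        if 2 * n + t ∈ {i | X i ω = true} + {i | X i ω = true} then 0 else 1)
        ∂(μ[|{ω | ∀ i < n, (X i ω = true ↔ i ∈ β)}]) =
      5 * (1 / 2 : ENNReal) ^ β.card := by
  classical
  set E : Set Ω := {ω | ∀ i < n, (X i ω = true ↔ i ∈ β)} with hE_def
  -- E as an intersection
  have hE_eq : E = ⋂ i ∈ Finset.range n, X i ⁻¹' {decide (i ∈ β)} := by
    ext ω
    simp only [hE_def, Set.mem_setOf_eq, Set.mem_iInter, Finset.mem_range,
      Set.mem_preimage, Set.mem_singleton_iff]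
    constructor
    · intro h i hi
      by_cases hib : i ∈ β
      · simp [hib, (h i hi).mpr hib]
      · simp only [decide_eq_false hib]
        rw [← Bool.not_eq_true]
        exact fun hx => hib ((h i hi).mp hx)
    · intro h i hi
      by_cases hib : i ∈ β <;> simp [h i hi, hib]
  have hE_meas : MeasurableSet E := by
    rw [hE_eq]
    exact Finset.measurableSet_biInter _ fun i _ => (hmeas i) (measurableSet_singleton _)
  -- measure of E
  have hfac : ∀ i ∈ Finset.range n, μ (X i ⁻¹' {decide (i ∈ β)}) =
      if i = 0 then 1 else 1/2 := by
    intro i _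
    rcases Nat.eq_zero_or_pos i with rfl | hi
    · rw [if_pos rfl]
      have : X 0 ⁻¹' {decide (0 ∈ β)} = Set.univ := by
        ext ω; simp [hzero ω, hβ0]
      rw [this, measure_univ]
    · rw [if_neg (by omega)]
      by_cases hib : i ∈ β
      · rw [decide_eq_true hib]; exact hhalf i hi
      · have : X i ⁻¹' {decide (i ∈ β)} = (X i ⁻¹' {true})ᶜ := by
          ext ω; simp [hib]
        rw [this, prob_compl_eq_one_sub ((hmeas i) (measurableSet_singleton _)),
          show μ (X i ⁻¹' {true}) = 1/2 from hhalf i hi, enn_one_sub_half]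
  have hμE : μ E = ∏ i ∈ Finset.range n, (if i = 0 then (1:ENNReal) else 1/2) := by
    rw [hE_eq, hindep.meas_biInter (fun i _ => ⟨{decide (i ∈ β)}, trivial, rfl⟩)]
    exact Finset.prod_congr rfl hfac
  have hμE_ne : μ E ≠ 0 := by
    rw [hμE]
    rw [Finset.prod_ne_zero_iff]
    intro i _
    split <;> simp
  have hμE_top : μ E ≠ ⊤ := (measure_lt_top μ E).ne
  
  set q : ℕ → ENNReal := fun t => if Even t then (1/2) * (3/4)^(t/2) else (3/4)^((t+1)/2)
    with hq_def
  have key : ∀ t : ℕ,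
      (μ[|E]) {ω | ¬ (2*n+t ∈ {i | X i ω = true} + {i | X i ω = true})} =
        (1/2)^β.card * q t := by
    intro t
    set t' := 2*n+t with ht'_def
    set G : Set Ω := ⋂ b ∈ β, X (t' - b) ⁻¹' {false} with hGd
    set P : Set Ω := ⋂ j ∈ Finset.Icc n (t'/2), {ω | ¬(X j ω = true ∧ X (t' - j) ω = true)}
      with hPd
    have hlogic : E ∩ {ω | ¬ (t' ∈ {i | X i ω = true} + {i | X i ω = true})} = E ∩ (G ∩ P) := by
      ext ω
      simp only [Set.mem_inter_iff, Set.mem_setOf_eq, hGd, hPd, Set.mem_iInter,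
        Set.mem_preimage, Set.mem_singleton_iff, Finset.mem_Icc, and_congr_right_iff, hE_def]
      intro hω
      constructor
      · intro hmem
        constructor
        · intro b hb
          rw [← Bool.not_eq_true]
          intro hx
          have hsum : b + (t' - b) = t' := by have := hβn b hb; omega
          exact hmem (hsum ▸ Set.add_mem_add ((hω b (hβn b hb)).mpr hb) hx)
        · intro j hj hcontra
          have hsum : j + (t' - j) = t' := by omega
          exact hmem (hsum ▸ Set.add_mem_add hcontra.1 hcontra.2)
      · rintro ⟨hG, hP⟩ hmem
        rw [Set.mem_add] at hmem
        obtain ⟨x, hx, y, hy, hxy⟩ := hmem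
        have claim : ∀ x y : ℕ, x + y = t' → x ≤ y →
            X x ω = true → X y ω = true → False := by
          intro x y hxy hle hx hy
          by_cases hxn : x < n
          · have hxβ : x ∈ β := (hω x hxn).mp hx
            have := hG x hxβ
            have hyx : t' - x = y := by omega
            rw [hyx, hy] at this
            simp at this
          · have hx2 : x ≤ t'/2 := by omega
            have := hP x ⟨by omega, hx2⟩
            have hyx : t' - x = y := by omega
            rw [hyx] at this
            exact this ⟨hx, hy⟩
        rcases le_total x y with hle | hle
        · exact claim x y hxy hle hx hy
        · exact claim y x (by omega) hle hy hx
    -- measure of G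
    have hμG : μ G = (1/2) ^ β.card := by
      have hGeq : G = ⋂ i ∈ β.image (fun b => t' - b), X i ⁻¹' {false} := by
        rw [hGd]; ext ω; simp
      rw [hGeq, hindep.meas_biInter (fun i _ => ⟨{false}, trivial, rfl⟩)]
      have hval : ∀ i ∈ β.image (fun b => t' - b), μ (X i ⁻¹' {false}) = 1/2 := by
        intro i hi
        rw [Finset.mem_image] at hi
        obtain ⟨b, hb, rfl⟩ := hi
        have hb' := hβn b hb
        have : X (t' - b) ⁻¹' {false} = (X (t' - b) ⁻¹' {true})ᶜ := by
          ext ω; simp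
        rw [this, prob_compl_eq_one_sub ((hmeas _) (measurableSet_singleton _)),
          show μ (X (t' - b) ⁻¹' {true}) = 1/2 from hhalf _ (by omega), enn_one_sub_half]
      rw [Finset.prod_congr rfl hval, Finset.prod_const,
        Finset.card_image_of_injOn (fun a ha b hb hab => by
          have := hβn a ha; have := hβn b hb; omega)]
    -- measure of P
    have hμP : μ P = q t := by
      rw [hPd, pairs_meas hmeas hindep hhalf hn t' (t'/2) (by omega), ht'_def,
        prod_value n t]
    -- independence: split G∩P from E
    have hsplit1 : μ (E ∩ (G ∩ P)) = μ E * μ (G ∩ P) := by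
      refine blocks_indep hmeas hindep (S := {i | i < n}) (T := {i | n ≤ i})
        (by rw [Set.disjoint_left]; intro a ha hb; simp at ha hb; omega) ?_ ?_
      · rw [hE_eq]
        refine Finset.measurableSet_biInter _ (fun i hi => ?_)
        rw [Finset.mem_range] at hi
        exact meas_mem_sup (show i ∈ ({i | i < n} : Set ℕ) from hi) _
      · refine MeasurableSet.inter ?_ ?_
        · rw [hGd]
          refine Finset.measurableSet_biInter _ (fun b hb => ?_)
          exact meas_mem_sup (show t' - b ∈ ({i | n ≤ i} : Set ℕ) by have := hβn b hb; simp; omega) _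
        · rw [hPd]
          refine Finset.measurableSet_biInter _ (fun j hj => ?_)
          rw [Finset.mem_Icc] at hj
          have hrw : {ω | ¬(X j ω = true ∧ X (t' - j) ω = true)} =
              (X j ⁻¹' {true} ∩ X (t' - j) ⁻¹' {true})ᶜ := by ext ω; simp
          rw [hrw]
          exact ((meas_mem_sup (show j ∈ ({i | n ≤ i} : Set ℕ) from hj.1) _).inter
            (meas_mem_sup (show t' - j ∈ ({i | n ≤ i} : Set ℕ) by simp; omega) _)).compl
    -- independence: split G from P
    have hsplit2 : μ (G ∩ P) = μ G * μ P := by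
      refine blocks_indep hmeas hindep (S := {i | t' - n < i}) (T := {i | i ≤ t' - n})
        (by rw [Set.disjoint_left]; intro a ha hb; simp at ha hb; omega) ?_ ?_
      · rw [hGd]
        refine Finset.measurableSet_biInter _ (fun b hb => ?_)
        exact meas_mem_sup (show t' - b ∈ ({i | t' - n < i} : Set ℕ) by have := hβn b hb; simp; omega) _
      · rw [hPd]
        refine Finset.measurableSet_biInter _ (fun j hj => ?_)
        rw [Finset.mem_Icc] at hj
        have hrw : {ω | ¬(X j ω = true ∧ X (t' - j) ω = true)} =
            (X j ⁻¹' {true} ∩ X (t' - j) ⁻¹' {true})ᶜ := by ext ω; simp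
        rw [hrw]
        exact ((meas_mem_sup (show j ∈ ({i | i ≤ t' - n} : Set ℕ) by simp; omega) _).inter
          (meas_mem_sup (show t' - j ∈ ({i | i ≤ t' - n} : Set ℕ) by simp; omega) _)).compl
    rw [ProbabilityTheory.cond_apply hE_meas, hlogic, hsplit1, hsplit2, hμG, hμP,
      ← mul_assoc, ENNReal.inv_mul_cancel hμE_ne hμE_top, one_mul]
  -- measurability of the "t' in D+D" events
  have hM_meas : ∀ t : ℕ,
      MeasurableSet {ω | 2*n+t ∈ {i | X i ω = true} + {i | X i ω = true}} := by
    intro t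
    have heq : {ω | 2*n+t ∈ {i | X i ω = true} + {i | X i ω = true}} =
        ⋃ a ∈ Finset.range (2*n+t+1), (X a ⁻¹' {true} ∩ X (2*n+t-a) ⁻¹' {true}) := by
      ext ω
      simp only [Set.mem_setOf_eq, Set.mem_iUnion, Finset.mem_range, Set.mem_inter_iff,
        Set.mem_preimage, Set.mem_singleton_iff, Set.mem_add, exists_prop]
      constructor
      · rintro ⟨x, hx, y, hy, hxy⟩
        exact ⟨x, by omega, hx, by rwa [show 2*n+t-x = y by omega]⟩
      · rintro ⟨a, ha, h1, h2⟩
        exact ⟨a, h1, 2*n+t-a, h2, by omega⟩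
    rw [heq]
    exact Finset.measurableSet_biUnion _ (fun a _ =>
      ((hmeas a) (measurableSet_singleton _)).inter ((hmeas _) (measurableSet_singleton _)))
  -- rewrite the integrand as indicators and integrate term by term
  have hf_eq : ∀ t : ℕ, (fun ω => if 2*n+t ∈ {i | X i ω = true} + {i | X i ω = true}
      then (0:ENNReal) else 1) =
      Set.indicator {ω | ¬ (2*n+t ∈ {i | X i ω = true} + {i | X i ω = true})} 1 := by
    intro t
    funext ω
    by_cases h : 2*n+t ∈ {i | X i ω = true} + {i | X i ω = true} <;>
      simp [h, Set.indicator_apply]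
  rw [lintegral_tsum (fun t => by
    rw [hf_eq t]
    exact (measurable_one.indicator (hM_meas t).compl).aemeasurable)]
  have hterm : ∀ t : ℕ, ∫⁻ ω, (if 2*n+t ∈ {i | X i ω = true} + {i | X i ω = true}
      then (0:ENNReal) else 1) ∂(μ[|E]) = (1/2)^β.card * q t := by
    intro t
    have hstep : ∫⁻ ω, (if 2*n+t ∈ {i | X i ω = true} + {i | X i ω = true}
        then (0:ENNReal) else 1) ∂(μ[|E]) =
        ∫⁻ ω, Set.indicator {ω | ¬ (2*n+t ∈ {i | X i ω = true} + {i | X i ω = true})}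
          1 ω ∂(μ[|E]) :=
      lintegral_congr (fun ω => by
        by_cases h : 2*n+t ∈ {i | X i ω = true} + {i | X i ω = true} <;>
          simp [h, Set.indicator_apply])
    rw [hstep, lintegral_indicator_one (show MeasurableSet
      {ω | ¬ (2*n+t ∈ {i | X i ω = true} + {i | X i ω = true})} from (hM_meas t).compl)]
    exact key t
  rw [tsum_congr hterm, ENNReal.tsum_mul_left]
  -- compute the geometric sums
  have h34top : ((3:ENNReal)/4) ≠ ⊤ := by exact_mod_cast enn_div_ne_top (by norm_num)
  have hsub : (1 : ENNReal) - 3/4 = 1/4 := by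
    refine ENNReal.sub_eq_of_eq_add h34top ?_
    rw [← ENNReal.toReal_eq_toReal_iff' (by simp) (ENNReal.add_ne_top.2 ⟨by simp, h34top⟩)]
    rw [ENNReal.toReal_add (by simp) h34top]; simp [ENNReal.toReal_div]; norm_num
  have hgeom : ∑' k : ℕ, ((3:ENNReal)/4)^k = 4 := by
    rw [ENNReal.tsum_geometric, hsub, one_div, inv_inv]
  have hqsum : ∑' t, q t = 5 := by
    rw [← tsum_even_add_odd (f := q) ENNReal.summable ENNReal.summable]
    have hqe : ∀ k : ℕ, q (2*k) = (1/2) * (3/4)^k := by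
      intro k
      simp only [hq_def]
      rw [if_pos ⟨k, by omega⟩, show 2*k/2 = k by omega]
    have hqo : ∀ k : ℕ, q (2*k+1) = (3/4)^(k+1) := by
      intro k
      simp only [hq_def]
      rw [if_neg (by simp [Nat.even_iff]), show (2*k+1+1)/2 = k+1 by omega]
    rw [tsum_congr hqe, tsum_congr hqo]
    have h1 : ∑' k : ℕ, ((1:ENNReal)/2) * (3/4)^k = 2 := by
      rw [ENNReal.tsum_mul_left, hgeom,
        ← ENNReal.toReal_eq_toReal_iff' (ENNReal.mul_ne_top (by simp) (by simp)) (by simp),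
        ENNReal.toReal_mul]
      simp [ENNReal.toReal_div] <;> norm_num
    have h2 : ∑' k : ℕ, ((3:ENNReal)/4)^(k+1) = 3 := by
      have : ∀ k : ℕ, ((3:ENNReal)/4)^(k+1) = (3/4)^k * (3/4) := fun k => pow_succ _ _
      rw [tsum_congr this, ENNReal.tsum_mul_right, hgeom,
        ← ENNReal.toReal_eq_toReal_iff' (ENNReal.mul_ne_top (by simp) h34top) (by simp),
        ENNReal.toReal_mul]
      simp [ENNReal.toReal_div] <;> norm_num
    rw [h1, h2]
    norm_num
  rw [hqsum, mul_comm]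
end
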